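/- arXiv:math/0406491 — 6 statements merged into one kernel-verified Lean document; each statement's English description precedes it below -/
import Mathlib

section
/- Let z, w ∈ ℂ with z ≠ 0 and w ≠ 0, and let √z denote the principal square root of z. The following are equivalent: (i) Re(w·√z) ≠ 0; (ii) for every real τ, τ² + w²·z ≠ 0; (iii) the complex numbers w and i·conj(√z), regarded as vectors in ℝ², are linearly independent over ℝ. -/
/-- For `z w : ℂ` nonzero, with `√z` the principal square root,
the following are equivalent:
(i) `Re (w·√z) ≠ 0`;
(ii) for every real `τ`, `τ² + w²·z ≠ 0`;
(iii) `w` and `i·conj(√z)` are linearly independent over `ℝ` in `ℂ`. -/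
theorem stmt0 (z w : ℂ) (hz : z ≠ 0) (hw : w ≠ 0) :
    ((w * z ^ (1/2 : ℂ)).re ≠ 0 ↔ ∀ τ : ℝ, (τ : ℂ) ^ 2 + w ^ 2 * z ≠ 0) ∧
    ((w * z ^ (1/2 : ℂ)).re ≠ 0 ↔
      LinearIndependent ℝ ![w, Complex.I * (starRingEnd ℂ) (z ^ (1/2 : ℂ))]) := by
  set s : ℂ := z ^ (1/2 : ℂ) with hsdef
  have hs2 : s * s = z := by
    rw [hsdef, ← Complex.cpow_add _ _ hz]
    norm_num
  have hs : s ≠ 0 := by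
    intro h
    apply hz
    rw [← hs2, h, mul_zero]
  have hws : w * s ≠ 0 := mul_ne_zero hw hs
  have key : w ^ 2 * z = (w * s) ^ 2 := by rw [← hs2]; ring
  have hconj : (starRingEnd ℂ) s * s = (Complex.normSq s : ℂ) := by
    rw [mul_comm, Complex.mul_conj]
  have hns : (Complex.normSq s : ℂ) ≠ 0 := by simpa using hs
  constructor
  · constructor
    · intro h τ hc
      rw [key] at hc
      generalize hg : w * s = u at hc h
      have h1 := congrArg Complex.re hc
      have h2 := congrArg Complex.im hc
      simp [pow_two, Complex.mul_re, Complex.mul_im] at h1 h2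
      nlinarith [mul_self_pos.mpr h, sq_nonneg τ, sq_nonneg u.im, h1, h2]
    · intro hall
      by_contra h
      apply hall ((w * s).im)
      rw [key]
      apply Complex.ext <;>
        simp [pow_two, Complex.mul_re, Complex.mul_im, h]
  · rw [linearIndependent_fin2]
    simp only [Matrix.cons_val_one, Matrix.head_cons, Matrix.cons_val_zero]
    constructor
    · intro h
      refine ⟨?_, ?_⟩
      · simp [Complex.I_ne_zero, hs]
      · intro a hc
        apply h
        have : w * s = (a * Complex.normSq s) * Complex.I := by
          rw [← hc, Complex.real_smul]
          linear_combination (a : ℂ) * Complex.I * hconj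
        rw [this]
        simp
    · rintro ⟨-, h⟩ hre
      set b : ℝ := (w * s).im with hb
      apply h (b / Complex.normSq s)
      have hwi : w * s = (b : ℂ) * Complex.I := by
        apply Complex.ext <;> simp [hre, hb]
      apply mul_right_cancel₀ hs
      rw [Complex.real_smul, hwi, Complex.ofReal_div]
      field_simp
      linear_combination (b : ℂ) * hconj
end

section
/- Let V : ℂ → ℂ be entire, let γ : [0,1] → ℂ be a continuously differentiable path, let E₀ ∈ ℂ and d > 0, and let s : [0,1] → ℂ be continuous with s(t)² = V(γ(t)) − E₀ and Re(s(t)·γ′(t)) ≥ d·|γ′(t)| for all t ∈ [0,1]. Then for every E ∈ ℂ with |E − E₀| ≤ d²/4 there exists a continuous function s_E : [0,1] → ℂ with s_E(t)² = V(γ(t)) − E and Re(s_E(t)·γ′(t)) ≥ (d/2)·|γ′(t)| for all t ∈ [0,1]. -/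
/-- An explicit continuous square root on the right half plane. -/
noncomputable def csqrt (w : ℂ) : ℂ :=
  (Real.sqrt ((‖w‖ + w.re) / 2) : ℂ) +
    (w.im / (2 * Real.sqrt ((‖w‖ + w.re) / 2)) : ℝ) * Complex.I

lemma csqrt_re (w : ℂ) : (csqrt w).re = Real.sqrt ((‖w‖ + w.re) / 2) := by
  simp only [csqrt, Complex.add_re, Complex.ofReal_re, Complex.mul_re, Complex.ofReal_im,
    Complex.I_re, Complex.I_im]
  ring

lemma csqrt_im (w : ℂ) :
    (csqrt w).im = w.im / (2 * Real.sqrt ((‖w‖ + w.re) / 2)) := by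
  simp only [csqrt, Complex.add_im, Complex.ofReal_im, Complex.mul_im, Complex.ofReal_re,
    Complex.I_re, Complex.I_im]
  ring

lemma csqrt_re_pos {w : ℂ} (hw : 0 < w.re) : 0 < (csqrt w).re := by
  rw [csqrt_re]
  apply Real.sqrt_pos.2
  have := norm_nonneg w
  linarith

lemma csqrt_sq {w : ℂ} (hw : 0 < w.re) : csqrt w ^ 2 = w := by
  have habs : ‖w‖ * ‖w‖ = w.re * w.re + w.im * w.im := by
    rw [Complex.norm_mul_self_eq_normSq, Complex.normSq_apply]
  have hnn : 0 ≤ (‖w‖ + w.re) / 2 := by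
    have := norm_nonneg w; linarith
  have hx : 0 < Real.sqrt ((‖w‖ + w.re) / 2) := by
    apply Real.sqrt_pos.2; have := norm_nonneg w; linarith
  set x := Real.sqrt ((‖w‖ + w.re) / 2) with hxdef
  have hx2 : x * x = (‖w‖ + w.re) / 2 := Real.mul_self_sqrt hnn
  apply Complex.ext
  · rw [sq, Complex.mul_re, csqrt_re w, csqrt_im w, ← hxdef]
    field_simp
    nlinarith [hx2, habs]
  · rw [sq, Complex.mul_im, csqrt_re w, csqrt_im w, ← hxdef]
    field_simp
    ring
lemma continuousOn_csqrt : ContinuousOn csqrt {w : ℂ | 0 < w.re} := by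
  have hxc : Continuous fun w : ℂ => Real.sqrt ((‖w‖ + w.re) / 2) :=
    Real.continuous_sqrt.comp ((continuous_norm.add Complex.continuous_re).div_const 2)
  apply ContinuousOn.add
  · exact (Complex.continuous_ofReal.comp hxc).continuousOn
  · apply ContinuousOn.mul _ continuousOn_const
    apply Complex.continuous_ofReal.comp_continuousOn
    apply ContinuousOn.div Complex.continuous_im.continuousOn
      (continuous_const.mul hxc).continuousOn
    intro w hw
    have hx : 0 < Real.sqrt ((‖w‖ + w.re) / 2) := by
      apply Real.sqrt_pos.2; have := norm_nonneg w
      have hw' : 0 < w.re := hw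
      linarith
    exact mul_ne_zero two_ne_zero hx.ne'

/-- openness of the set of energies admitting a progressive path.
If `s` is a continuous branch of the square root of `V∘γ − E₀` along a `C¹` path `γ`
with `Re(s·γ′) ≥ d·|γ′|`, then for `|E − E₀| ≤ d²/4` there is a continuous branch
`sE` of the square root of `V∘γ − E` with `Re(sE·γ′) ≥ (d/2)·|γ′|`. -/
theorem stmt1 (V : ℂ → ℂ) (hV : Differentiable ℂ V)
    (γ γ' : ℝ → ℂ) (E₀ : ℂ) (d : ℝ) (hd : 0 < d)
    (hγ : ∀ t ∈ Set.Icc (0:ℝ) 1, HasDerivWithinAt γ (γ' t) (Set.Icc (0:ℝ) 1) t)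
    (hγ' : ContinuousOn γ' (Set.Icc (0:ℝ) 1))
    (s : ℝ → ℂ) (hs : ContinuousOn s (Set.Icc (0:ℝ) 1))
    (hsq : ∀ t ∈ Set.Icc (0:ℝ) 1, s t ^ 2 = V (γ t) - E₀)
    (hre : ∀ t ∈ Set.Icc (0:ℝ) 1, d * ‖γ' t‖ ≤ (s t * γ' t).re) :
    ∀ E : ℂ, ‖E - E₀‖ ≤ d ^ 2 / 4 →
      ∃ sE : ℝ → ℂ, ContinuousOn sE (Set.Icc (0:ℝ) 1) ∧
        (∀ t ∈ Set.Icc (0:ℝ) 1, sE t ^ 2 = V (γ t) - E) ∧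
        (∀ t ∈ Set.Icc (0:ℝ) 1, (d / 2) * ‖γ' t‖ ≤ (sE t * γ' t).re) := by
  intro E hE
  set X := Set.Icc (0:ℝ) 1 with hX
  have hγc : ContinuousOn γ X := fun t ht => (hγ t ht).continuousWithinAt
  have hc : ‖E₀ - E‖ ≤ d ^ 2 / 4 := by
    rw [norm_sub_rev]; exact hE
  -- wherever |s| < d the derivative vanishes
  have key : ∀ t ∈ X, ‖s t‖ < d → γ' t = 0 := by
    intro t ht hlt
    by_contra h
    have h1 : 0 < ‖γ' t‖ := norm_pos_iff.mpr h
    have h2 := hre t ht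
    have h3 : (s t * γ' t).re ≤ ‖s t‖ * ‖γ' t‖ := by
      calc (s t * γ' t).re ≤ ‖s t * γ' t‖ := Complex.re_le_norm _
        _ = ‖s t‖ * ‖γ' t‖ := norm_mul _ _
    nlinarith
  by_cases hbig : ∀ t ∈ X, d ≤ ‖s t‖
  · -- Case 1 : |s| ≥ d everywhere
    set c := E₀ - E with hcdef
    have hsne : ∀ t ∈ X, s t ≠ 0 := by
      intro t ht h
      have h1 := hbig t ht
      rw [h] at h1; simp at h1; linarith
    have hz : ∀ t ∈ X, ‖c / s t ^ 2‖ ≤ 1/4 := by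
      intro t ht
      rw [norm_div, norm_pow]
      have hb := hbig t ht
      have h4 : d ^ 2 ≤ ‖s t‖ ^ 2 := by nlinarith [norm_nonneg (s t)]
      rw [div_le_iff₀ (pow_pos (lt_of_lt_of_le hd hb) 2)]
      calc ‖c‖ ≤ d ^ 2 / 4 := hc
        _ ≤ 1/4 * ‖s t‖ ^ 2 := by nlinarith
    have hzre : ∀ t ∈ X, 0 < (1 + c / s t ^ 2).re := by
      intro t ht
      have h5 : |(c / s t ^ 2).re| ≤ ‖c / s t ^ 2‖ := Complex.abs_re_le_norm _
      have h6 := hz t ht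
      have h7 : (1 + c / s t ^ 2).re = 1 + (c / s t ^ 2).re := by simp
      rw [h7]
      cases abs_le.1 h5 with
      | intro hl hr => linarith
    refine ⟨fun t => s t * csqrt (1 + c / s t ^ 2), ?_, ?_, ?_⟩
    · apply hs.mul
      apply continuousOn_csqrt.comp
      · exact ContinuousOn.add continuousOn_const
          (ContinuousOn.div continuousOn_const (hs.pow 2)
            (fun t ht => pow_ne_zero 2 (hsne t ht)))
      · intro t ht; exact hzre t ht
    · intro t ht
      have h6 := csqrt_sq (hzre t ht)
      have h7 := hsq t ht
      have h8 := hsne t ht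
      rw [mul_pow, h6]
      calc s t ^ 2 * (1 + c / s t ^ 2) = s t ^ 2 + c := by field_simp
        _ = V (γ t) - E := by rw [h7, hcdef]; ring
    · intro t ht
      set u := csqrt (1 + c / s t ^ 2) with hu
      have hure : 0 < u.re := csqrt_re_pos (hzre t ht)
      have husq : u ^ 2 = 1 + c / s t ^ 2 := csqrt_sq (hzre t ht)
      have h9 : (u - 1) * (u + 1) = c / s t ^ 2 := by
        have h9' : (u - 1) * (u + 1) = u ^ 2 - 1 := by ring
        rw [h9', husq]; ring
      have h10 : (1:ℝ) ≤ ‖u + 1‖ := by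
        have h10a := Complex.re_le_norm (u + 1)
        have h10b : (u + 1).re = u.re + 1 := by simp
        linarith
      have h11 : ‖u - 1‖ ≤ ‖c / s t ^ 2‖ := by
        have hm : ‖u - 1‖ * ‖u + 1‖ = ‖c / s t ^ 2‖ := by
          rw [← norm_mul, h9]
        nlinarith [norm_nonneg (u - 1)]
      -- |s t| * |u-1| ≤ d/4
      have hA : d ≤ ‖s t‖ := hbig t ht
      have hApos : 0 < ‖s t‖ := lt_of_lt_of_le hd hA
      have h11' : ‖u - 1‖ ≤ ‖c‖ / ‖s t‖ ^ 2 := by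
        rw [norm_div, norm_pow] at h11; exact h11
      have h12 : ‖s t‖ * ‖u - 1‖ ≤ d / 4 := by
        calc ‖s t‖ * ‖u - 1‖
            ≤ ‖s t‖ * (‖c‖ / ‖s t‖ ^ 2) :=
              mul_le_mul_of_nonneg_left h11' (le_of_lt hApos)
          _ = ‖c‖ / ‖s t‖ := by field_simp
          _ ≤ (d ^ 2 / 4) / d := div_le_div₀ (by positivity) hc hd hA
          _ = d / 4 := by field_simp
      have hsplit : s t * u * γ' t = s t * γ' t + s t * (u - 1) * γ' t := by ring
      have h13 : -(‖s t * (u - 1) * γ' t‖) ≤ (s t * (u - 1) * γ' t).re := by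
        have := Complex.abs_re_le_norm (s t * (u - 1) * γ' t)
        cases abs_le.1 this with
        | intro hl hr => linarith
      have h14 : ‖s t * (u - 1) * γ' t‖
          = ‖s t‖ * ‖u - 1‖ * ‖γ' t‖ := by
        rw [norm_mul, norm_mul]
      have h15 := hre t ht
      have hg0 : 0 ≤ ‖γ' t‖ := norm_nonneg _
      have h16 : ‖s t‖ * ‖u - 1‖ * ‖γ' t‖
          ≤ d / 4 * ‖γ' t‖ := mul_le_mul_of_nonneg_right h12 hg0
      rw [hsplit, Complex.add_re]
      rw [h14] at h13
      nlinarith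
  · -- Case 2 : |s t₀| < d somewhere, then everything is constant
    push_neg at hbig
    obtain ⟨t₀, ht₀, hlt₀⟩ := hbig
    haveI : PreconnectedSpace X := Subtype.preconnectedSpace isPreconnected_Icc
    set D : Set X := {x : X | γ ↑x = γ t₀ ∧ s ↑x = s t₀} with hD
    have hclosed : IsClosed D := by
      have : D = {x : X | γ ↑x = γ t₀} ∩ {x : X | s ↑x = s t₀} := rfl
      rw [this]
      exact (isClosed_eq (hγc.restrict) continuous_const).inter
        (isClosed_eq (hs.restrict) continuous_const)
    have hopen : IsOpen D := by
      rw [isOpen_iff_mem_nhds]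
      rintro x₀ ⟨hγx₀, hsx₀⟩
      have hx₀X : (x₀ : ℝ) ∈ X := x₀.2
      have hsmall : ‖s ↑x₀‖ < d := by rw [hsx₀]; exact hlt₀
      have hcw : ContinuousWithinAt s X ↑x₀ := hs _ hx₀X
      have hopenset : IsOpen {w : ℂ | ‖w‖ < d} :=
        isOpen_lt continuous_norm continuous_const
      have hmem : s ⁻¹' {w : ℂ | ‖w‖ < d} ∈ nhdsWithin (↑x₀ : ℝ) X :=
        hcw (hopenset.mem_nhds hsmall)
      obtain ⟨ε, hε, hball⟩ := Metric.mem_nhdsWithin_iff.1 hmem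
      set J := Metric.ball (x₀ : ℝ) ε ∩ X with hJ
      have hJX : J ⊆ X := Set.inter_subset_right
      have hJconv : Convex ℝ J := (convex_ball _ _).inter (convex_Icc _ _)
      have hx₀J : (x₀ : ℝ) ∈ J := ⟨Metric.mem_ball_self hε, hx₀X⟩
      have hJs : ∀ t ∈ J, ‖s t‖ < d := fun t ht => hball ht
      have hJγ' : ∀ t ∈ J, γ' t = 0 := fun t ht => key t (hJX ht) (hJs t ht)
      have hJγconst : ∀ t ∈ J, γ t = γ ↑x₀ := by
        intro t ht
        have hmv := hJconv.norm_image_sub_le_of_norm_hasDerivWithin_le (f := γ) (f' := γ')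
          (C := 0) (fun u hu => (hγ u (hJX hu)).mono hJX)
          (fun u hu => by rw [hJγ' u hu]; simp) hx₀J ht
        have : ‖γ t - γ ↑x₀‖ ≤ 0 := by simpa using hmv
        have := norm_le_zero_iff.1 this
        exact sub_eq_zero.1 this
      have hJssq : ∀ t ∈ J, s t ^ 2 = s ↑x₀ ^ 2 := by
        intro t ht
        rw [hsq t (hJX ht), hsq _ hx₀X, hJγconst t ht]
      have hJsconst : ∀ t ∈ J, s t = s ↑x₀ := by
        intro t ht
        by_cases h0 : s ↑x₀ = 0
        · rw [h0]
          have h1 := hJssq t ht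
          rw [h0] at h1
          simpa [pow_eq_zero_iff] using h1
        · by_contra hne
          have hpm : s t = - s ↑x₀ := by
            have h2 := hJssq t ht
            have h3 : (s t - s ↑x₀) * (s t + s ↑x₀) = 0 := by
              have : s t ^ 2 - s ↑x₀ ^ 2 = 0 := by rw [h2]; ring
              calc (s t - s ↑x₀) * (s t + s ↑x₀) = s t ^ 2 - s ↑x₀ ^ 2 := by ring
                _ = 0 := this
            rcases mul_eq_zero.1 h3 with h | h
            · exact absurd (sub_eq_zero.1 h) hne
            · linear_combination h
          set f : ℝ → ℝ := fun r => (s r * (s ↑x₀)⁻¹).re with hf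
          have huIcc : Set.uIcc (x₀ : ℝ) t ⊆ J := hJconv.ordConnected.uIcc_subset hx₀J ht
          have hfc : ContinuousOn f (Set.uIcc (x₀ : ℝ) t) := by
            apply Complex.continuous_re.comp_continuousOn
            exact ((hs.mono (huIcc.trans hJX)).mul continuousOn_const)
          have hIV := intermediate_value_uIcc hfc
          have h1 : f ↑x₀ = 1 := by
            rw [hf]; simp only []
            rw [mul_inv_cancel₀ h0]; simp
          have hm1 : f t = -1 := by
            rw [hf]; simp only []
            rw [hpm, neg_mul, mul_inv_cancel₀ h0]; simp
          have h0mem : (0:ℝ) ∈ Set.uIcc (f ↑x₀) (f t) := by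
            rw [h1, hm1, Set.mem_uIcc]; right; constructor <;> norm_num
          obtain ⟨r, hr, hfr⟩ := hIV h0mem
          have hrJ := huIcc hr
          have h2 := hJssq r hrJ
          have h3 : (s r - s ↑x₀) * (s r + s ↑x₀) = 0 := by
            calc (s r - s ↑x₀) * (s r + s ↑x₀) = s r ^ 2 - s ↑x₀ ^ 2 := by ring
              _ = 0 := by rw [h2]; ring
          rcases mul_eq_zero.1 h3 with h | h
          · have hsr : s r = s ↑x₀ := sub_eq_zero.1 h
            rw [hf] at hfr; simp only [] at hfr
            rw [hsr, mul_inv_cancel₀ h0] at hfr; simp at hfr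
          · have hsr : s r = - s ↑x₀ := by linear_combination h
            rw [hf] at hfr; simp only [] at hfr
            rw [hsr, neg_mul, mul_inv_cancel₀ h0] at hfr; simp at hfr
      have hsub : (Subtype.val ⁻¹' Metric.ball (x₀ : ℝ) ε : Set X) ⊆ D := by
        rintro x hx
        have hxJ : (x : ℝ) ∈ J := ⟨hx, x.2⟩
        exact ⟨by rw [hJγconst _ hxJ, hγx₀], by rw [hJsconst _ hxJ, hsx₀]⟩
      exact Filter.mem_of_superset
        (continuous_subtype_val.continuousAt.preimage_mem_nhds (Metric.ball_mem_nhds _ hε)) hsub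
    have hne : D.Nonempty := ⟨⟨t₀, ht₀⟩, rfl, rfl⟩
    have hDuniv : D = Set.univ := by
      rcases isClopen_iff.1 ⟨hclosed, hopen⟩ with h | h
      · exact absurd h (Set.nonempty_iff_ne_empty.1 hne)
      · exact h
    have hall : ∀ t (ht : t ∈ X), γ t = γ t₀ ∧ s t = s t₀ := by
      intro t ht
      have : (⟨t, ht⟩ : X) ∈ D := hDuniv ▸ Set.mem_univ _
      exact this
    have hγ'0 : ∀ t ∈ X, γ' t = 0 := by
      intro t ht
      apply key t ht
      rw [(hall t ht).2]; exact hlt₀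
    by_cases hz0 : V (γ t₀) - E = 0
    · refine ⟨fun _ => 0, continuousOn_const, ?_, ?_⟩
      · intro t ht
        rw [(hall t ht).1]
        simp [sub_eq_zero.1 hz0]
      · intro t ht
        rw [hγ'0 t ht]; simp
    · refine ⟨fun _ => Complex.exp (Complex.log (V (γ t₀) - E) / 2), continuousOn_const, ?_, ?_⟩
      · intro t ht
        rw [(hall t ht).1]
        rw [sq, ← Complex.exp_add]
        have : Complex.log (V (γ t₀) - E) / 2 + Complex.log (V (γ t₀) - E) / 2
            = Complex.log (V (γ t₀) - E) := by ring
        rw [this, Complex.exp_log hz0]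
      · intro t ht
        rw [hγ'0 t ht]; simp
end

section
/- For every M > 0 there exists c > 0 such that the following holds. Let V : ℂ → ℂ be entire with derivative V′, let E ∈ ℂ, let γ : [0,1] → ℂ be continuously differentiable with γ(0) = −1, γ(1) = 1 and ∫₀¹ |γ′(t)| dt ≤ M, let s : [0,1] → ℂ be continuous with s(t)² = V(γ(t)) − E for all t, let d ∈ (0,1] satisfy Re(s(t)·γ′(t)) ≥ d·|γ′(t)| for all t ∈ [0,1], and suppose |V′(γ(t))| ≤ M for all t ∈ [0,1]. Then for every h with 0 < h ≤ c·d⁷, every twice continuously differentiable u : [−1,1] → ℂ satisfying −h²u″(x) + V(x)u(x) = E·u(x) for all x ∈ [−1,1] and u(−1) = u(1) = 0 vanishes identically. -/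
set_option maxHeartbeats 1000000

open Set intervalIntegral MeasureTheory


/-- Gronwall: a function with `‖f'‖ ≤ K‖f‖` vanishing at the left endpoint vanishes. -/
lemma gron_zero {E : Type*} [NormedAddCommGroup E] [NormedSpace ℝ E] {f f' : ℝ → E} {K a b : ℝ}
    (hd : ∀ t ∈ Set.Icc a b, HasDerivWithinAt f (f' t) (Set.Icc a b) t)
    (hb : ∀ t ∈ Set.Icc a b, ‖f' t‖ ≤ K * ‖f t‖)
    (ha : f a = 0) : ∀ t ∈ Set.Icc a b, f t = 0 := by
  intro t ht
  have hcont : ContinuousOn f (Set.Icc a b) := fun x hx => (hd x hx).continuousWithinAt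
  have key := norm_le_gronwallBound_of_norm_deriv_right_le (f := f) (f' := f')
      (δ := 0) (K := K) (ε := 0) (a := a) (b := b) hcont
      (fun x hx => ((hd x ⟨hx.1, hx.2.le⟩).mono_of_mem_nhdsWithin (Icc_mem_nhdsGE_of_mem hx)))
      (by simp [ha]) (fun x hx => by simpa using hb x ⟨hx.1, hx.2.le⟩)
  have := key t ht
  rw [gronwallBound_ε0_δ0] at this
  exact norm_le_zero_iff.mp this

/-- Gronwall propagating a zero both forwards and backwards in time. -/
lemma gron_zero_two {E : Type*} [NormedAddCommGroup E] [NormedSpace ℝ E] {f f' : ℝ → E}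
    {K a b t₀ : ℝ} (ht₀ : t₀ ∈ Set.Icc a b)
    (hd : ∀ t ∈ Set.Icc a b, HasDerivWithinAt f (f' t) (Set.Icc a b) t)
    (hb : ∀ t ∈ Set.Icc a b, ‖f' t‖ ≤ K * ‖f t‖)
    (h0 : f t₀ = 0) : ∀ t ∈ Set.Icc a b, f t = 0 := by
  intro t ht
  rcases le_total t₀ t with hle | hle
  · -- forward
    have sub : Set.Icc t₀ b ⊆ Set.Icc a b := Set.Icc_subset_Icc ht₀.1 le_rfl
    exact gron_zero (f' := f') (K := K)
      (fun x hx => (hd x (sub hx)).mono sub) (fun x hx => hb x (sub hx)) h0 t ⟨hle, ht.2⟩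
  · -- backward: reflect
    set g : ℝ → E := fun τ => f (2 * t₀ - τ) with hg
    set g' : ℝ → E := fun τ => (-1 : ℝ) • f' (2 * t₀ - τ) with hg'
    have sub : ∀ τ ∈ Set.Icc t₀ (2 * t₀ - a), 2 * t₀ - τ ∈ Set.Icc a b := by
      intro τ hτ
      constructor <;> [linarith [hτ.2]; linarith [hτ.1, ht₀.2]]
    have hdg : ∀ τ ∈ Set.Icc t₀ (2 * t₀ - a), HasDerivWithinAt g (g' τ) (Set.Icc t₀ (2*t₀-a)) τ := by
      intro τ hτ
      have inner : HasDerivWithinAt (fun τ : ℝ => 2 * t₀ - τ) (-1) (Set.Icc t₀ (2*t₀-a)) τ := by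
        simpa using ((hasDerivWithinAt_const τ _ (2*t₀)).fun_sub (hasDerivWithinAt_id τ _))
      exact (hd _ (sub τ hτ)).scomp τ inner sub
    have hbg : ∀ τ ∈ Set.Icc t₀ (2 * t₀ - a), ‖g' τ‖ ≤ K * ‖g τ‖ := by
      intro τ hτ
      simpa [hg, hg'] using hb _ (sub τ hτ)
    have hga : g t₀ = 0 := by
      simp only [hg]
      rw [show 2 * t₀ - t₀ = t₀ by ring]; exact h0
    have := gron_zero hdg hbg hga (2 * t₀ - t) ⟨by linarith, by linarith [ht.1]⟩
    simpa [hg, show 2 * t₀ - (2 * t₀ - t) = t by ring] using this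


lemma entire_deriv {F : ℂ → ℂ} (hF : Differentiable ℂ F) : Differentiable ℂ (deriv F) := by
  have h1 : AnalyticOnNhd ℂ F univ := hF.differentiableOn.analyticOnNhd isOpen_univ
  exact fun z => (h1.deriv z (mem_univ z)).differentiableAt

/-- differentiation under the integral sign for weighted averages of `F` along segments
from `-1` to `z`. -/
lemma paramDeriv {F : ℂ → ℂ} (hF : Differentiable ℂ F) {c : ℝ → ℂ} (hc : Continuous c) (z₀ : ℂ) :
    HasDerivAt (fun z => ∫ t in (0:ℝ)..1, c t * F (-1 + (t:ℂ) * (z+1)))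
      (∫ t in (0:ℝ)..1, c t * (deriv F (-1 + (t:ℂ) * (z₀+1)) * (t:ℂ))) z₀ := by
  have hDF : Continuous (deriv F) := (entire_deriv hF).continuous
  obtain ⟨C₀, hC₀⟩ := (isCompact_closedBall (-1:ℂ) (‖z₀+1‖+1)).exists_bound_of_continuousOn
    hDF.continuousOn
  have hmem : ∀ (x : ℂ), x ∈ Metric.ball z₀ 1 → ∀ (t : ℝ), t ∈ Set.uIoc (0:ℝ) 1 →
      (-1 + (t:ℂ) * (x+1)) ∈ Metric.closedBall (-1:ℂ) (‖z₀+1‖+1) := by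
    intro x hx t ht
    rw [Set.uIoc_of_le (by norm_num : (0:ℝ) ≤ 1)] at ht
    rw [Metric.mem_closedBall, dist_eq_norm]
    have h1 : ‖(-1 + (t:ℂ) * (x+1)) - (-1)‖ = |t| * ‖x+1‖ := by
      rw [show (-1 + (t:ℂ) * (x+1)) - (-1) = (t:ℂ) * (x+1) by ring, norm_mul]
      simp
    rw [h1]
    have ht1 : |t| ≤ 1 := by rw [abs_le]; constructor <;> [linarith [ht.1]; exact ht.2]
    have hx1 : ‖x + 1‖ ≤ ‖z₀+1‖ + 1 := by
      calc ‖x + 1‖ = ‖(x - z₀) + (z₀ + 1)‖ := by ring_nf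
        _ ≤ ‖x - z₀‖ + ‖z₀+1‖ := norm_add_le _ _
        _ ≤ ‖z₀+1‖ + 1 := by
            have := Metric.mem_ball.mp hx; rw [dist_eq_norm] at this
            linarith [this.le]
    calc |t| * ‖x+1‖ ≤ 1 * (‖z₀+1‖+1) :=
          mul_le_mul ht1 hx1 (norm_nonneg _) (by norm_num)
      _ = ‖z₀+1‖+1 := one_mul _
  have key := (intervalIntegral.hasDerivAt_integral_of_dominated_loc_of_deriv_le
    (μ := volume) (a := (0:ℝ)) (b := 1) (x₀ := z₀)
    (F := fun z t => c t * F (-1 + (t:ℂ) * (z+1)))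
    (F' := fun z t => c t * (deriv F (-1 + (t:ℂ) * (z+1)) * (t:ℂ)))
    (bound := fun t => ‖c t‖ * C₀)
    (s := Metric.ball z₀ 1) (Metric.ball_mem_nhds z₀ one_pos)
    ?_ ?_ ?_ ?_ ?_ ?_).2
  · exact key
  · filter_upwards with x
    exact ((hc.mul (hF.continuous.comp (by continuity))).aestronglyMeasurable).restrict
  · exact ((hc.mul (hF.continuous.comp (by continuity))).intervalIntegrable _ _)
  · exact ((hc.mul ((hDF.comp (by continuity)).mul
      Complex.continuous_ofReal)).aestronglyMeasurable).restrict
  · filter_upwards with t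
    intro ht x hx
    have hm := hmem x hx t ht
    rw [Set.uIoc_of_le (by norm_num : (0:ℝ) ≤ 1)] at ht
    rw [norm_mul, norm_mul]
    have hDFb : ‖deriv F (-1 + (t:ℂ) * (x+1))‖ ≤ C₀ := hC₀ _ hm
    have htn : ‖(t:ℂ)‖ ≤ 1 := by
      simp only [Complex.norm_real, Real.norm_eq_abs, abs_le]
      constructor <;> [linarith [ht.1]; exact ht.2]
    have h0 : (0:ℝ) ≤ C₀ := le_trans (norm_nonneg _) (hC₀ (-1) (Metric.mem_closedBall_self (by positivity)))
    calc ‖c t‖ * (‖deriv F (-1 + (t:ℂ) * (x+1))‖ * ‖(t:ℂ)‖)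
        ≤ ‖c t‖ * (C₀ * 1) := by
          apply mul_le_mul_of_nonneg_left _ (norm_nonneg _)
          exact mul_le_mul hDFb htn (norm_nonneg _) h0
      _ = ‖c t‖ * C₀ := by ring
  · exact ((hc.norm.mul continuous_const).intervalIntegrable _ _)
  · filter_upwards with t
    intro ht x hx
    have inner : HasDerivAt (fun z : ℂ => -1 + (t:ℂ) * (z+1)) (t:ℂ) x := by
      have : HasDerivAt (fun z : ℂ => z + 1) 1 x := (hasDerivAt_id x).add_const 1
      simpa using ((this.const_mul (t:ℂ)).const_add (-1))
    exact ((hF.differentiableAt.hasDerivAt.comp x inner)).const_mul (c t)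


section
variable {F : ℂ → ℂ}

/-- One Picard iteration step: given entire `F`, produce an entire second primitive of `F`
(vanishing to second order at `-1`) with a quantitative bound. -/
lemma picardStep (hF : Differentiable ℂ F) :
    ∃ P : ℂ → ℂ, Differentiable ℂ P ∧ Differentiable ℂ (deriv P) ∧
      (∀ z, deriv (deriv P) z = F z) ∧ P (-1) = 0 ∧ deriv P (-1) = 0 ∧
      ∀ (z : ℂ) (C : ℝ) (m : ℕ), 0 ≤ C →
        (∀ t : ℝ, t ∈ Set.Icc (0:ℝ) 1 → ‖F (-1 + (t:ℂ) * (z+1))‖ ≤ C * t ^ m) →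
        ‖P z‖ ≤ C * ‖z+1‖^2 / (m+1) := by
  set DF := deriv F with hDFdef
  have hDF : Continuous DF := (entire_deriv hF).continuous
  set σ : ℂ → ℝ → ℂ := fun z t => -1 + (t:ℂ) * (z+1) with hσdef
  set H : ℂ → ℂ := fun z => ∫ t in (0:ℝ)..1, F (σ z t) with hHdef
  set H' : ℂ → ℂ := fun z => ∫ t in (0:ℝ)..1, DF (σ z t) * (t:ℂ) with hH'def
  set G : ℂ → ℂ := fun z => ∫ t in (0:ℝ)..1, (1 - (t:ℂ)) * F (σ z t) with hGdef
  set G' : ℂ → ℂ := fun z => ∫ t in (0:ℝ)..1, (1 - (t:ℂ)) * (DF (σ z t) * (t:ℂ)) with hG'def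
  -- basic continuity facts
  have hσcont : ∀ z, Continuous (fun t : ℝ => σ z t) := fun z => by
    exact continuous_const.add (Complex.continuous_ofReal.mul continuous_const)
  have hFσ : ∀ z, Continuous (fun t : ℝ => F (σ z t)) := fun z => hF.continuous.comp (hσcont z)
  have hDFσ : ∀ z, Continuous (fun t : ℝ => DF (σ z t)) := fun z => hDF.comp (hσcont z)
  -- derivative of H
  have hH : ∀ z, HasDerivAt H (H' z) z := by
    intro z
    have := paramDeriv hF continuous_const (c := fun _ => (1:ℂ)) z
    simpa only [one_mul, hHdef, hH'def] using this
  -- derivative of G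
  have hG : ∀ z, HasDerivAt G (G' z) z := by
    intro z
    have := paramDeriv hF (c := fun t : ℝ => 1 - (t:ℂ))
      (continuous_const.sub Complex.continuous_ofReal) z
    simpa only [hGdef, hG'def] using this
  -- derivative of t ↦ σ z t
  have hσt : ∀ z (t : ℝ), HasDerivAt (fun t : ℝ => σ z t) (z+1) t := by
    intro z t
    have h1 : HasDerivAt (fun t : ℝ => (t:ℂ)) 1 t := by
      simpa using (hasDerivAt_id t).ofReal_comp
    simpa [hσdef] using ((h1.mul_const (z+1)).const_add (-1))
  have hFσt : ∀ z (t : ℝ), HasDerivAt (fun t : ℝ => F (σ z t)) ((z+1) * DF (σ z t)) t := by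
    intro z t
    have := HasDerivAt.scomp (𝕜 := ℝ) (𝕜' := ℂ) t
      (hF.differentiableAt.hasDerivAt) (hσt z t)
    simpa [smul_eq_mul, Function.comp_def, hDFdef] using this
  have hcast : ∀ t : ℝ, HasDerivAt (fun t : ℝ => (t:ℂ)) 1 t := fun t => by
    simpa using (hasDerivAt_id t).ofReal_comp
  -- FTC identity 1 : H z + (z+1) * H' z = F z
  have ftc1 : ∀ z, H z + (z+1) * H' z = F z := by
    intro z
    have hder : ∀ t ∈ Set.uIcc (0:ℝ) 1,
        HasDerivAt (fun t : ℝ => (t:ℂ) * F (σ z t))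
          (F (σ z t) + (z+1) * (DF (σ z t) * (t:ℂ))) t := by
      intro t _
      have := (hcast t).fun_mul (hFσt z t)
      refine this.congr_deriv ?_
      ring
    have hint : IntervalIntegrable
        (fun t : ℝ => F (σ z t) + (z+1) * (DF (σ z t) * (t:ℂ))) volume 0 1 :=
      ((hFσ z).add (continuous_const.mul ((hDFσ z).mul Complex.continuous_ofReal))).intervalIntegrable _ _
    have := intervalIntegral.integral_eq_sub_of_hasDerivAt hder hint
    have hval : ((1:ℝ):ℂ) * F (σ z 1) - ((0:ℝ):ℂ) * F (σ z 0) = F z := by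
      simp [hσdef]
    rw [hval] at this
    rw [intervalIntegral.integral_add ((hFσ z).intervalIntegrable _ _)
        ((continuous_const.fun_mul ((hDFσ z).fun_mul Complex.continuous_ofReal)).intervalIntegrable _ _),
      intervalIntegral.integral_const_mul] at this
    simpa [hHdef, hH'def] using this
  -- FTC identity 2 : 2 * G z - H z + (z+1) * G' z = 0
  have ftc2 : ∀ z, 2 * G z - H z + (z+1) * G' z = 0 := by
    intro z
    have hder : ∀ t ∈ Set.uIcc (0:ℝ) 1,
        HasDerivAt (fun t : ℝ => (t:ℂ) * (1 - (t:ℂ)) * F (σ z t))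
          ((2 * (1 - (t:ℂ)) - 1) * F (σ z t) + (z+1) * ((1 - (t:ℂ)) * (DF (σ z t) * (t:ℂ)))) t := by
      intro t _
      have hc1 : HasDerivAt (fun t : ℝ => (t:ℂ) * (1 - (t:ℂ))) (1 - 2 * (t:ℂ)) t := by
        have := (hcast t).fun_mul ((hasDerivAt_const t (1:ℂ)).fun_sub (hcast t))
        refine this.congr_deriv ?_
        ring
      have := hc1.fun_mul (hFσt z t)
      refine this.congr_deriv ?_
      ring
    have hint : IntervalIntegrable
        (fun t : ℝ => (2 * (1 - (t:ℂ)) - 1) * F (σ z t)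
          + (z+1) * ((1 - (t:ℂ)) * (DF (σ z t) * (t:ℂ)))) volume 0 1 :=
      ((((continuous_const.mul (continuous_const.sub Complex.continuous_ofReal)).sub
          continuous_const).mul (hFσ z)).add (continuous_const.mul
          ((continuous_const.sub Complex.continuous_ofReal).mul
            ((hDFσ z).mul Complex.continuous_ofReal)))).intervalIntegrable _ _
    have := intervalIntegral.integral_eq_sub_of_hasDerivAt hder hint
    have hval : ((1:ℝ):ℂ) * (1 - ((1:ℝ):ℂ)) * F (σ z 1) - ((0:ℝ):ℂ) * (1 - ((0:ℝ):ℂ)) * F (σ z 0) = 0 := by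
      simp
    rw [hval] at this
    have hsplit : (∫ t in (0:ℝ)..1, ((2 * (1 - (t:ℂ)) - 1) * F (σ z t)
          + (z+1) * ((1 - (t:ℂ)) * (DF (σ z t) * (t:ℂ)))))
        = (2 * G z - H z) + (z+1) * G' z := by
      rw [intervalIntegral.integral_add
        ((((continuous_const.fun_mul (continuous_const.fun_sub Complex.continuous_ofReal)).fun_sub
          continuous_const).fun_mul (hFσ z)).intervalIntegrable _ _)
        ((continuous_const.fun_mul ((continuous_const.fun_sub Complex.continuous_ofReal).fun_mul
          ((hDFσ z).fun_mul Complex.continuous_ofReal))).intervalIntegrable _ _)]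
      congr 1
      · have : (fun t : ℝ => (2 * (1 - (t:ℂ)) - 1) * F (σ z t))
            = fun t : ℝ => 2 * ((1 - (t:ℂ)) * F (σ z t)) - F (σ z t) := by
          funext t; ring
        rw [this, intervalIntegral.integral_sub
            ((continuous_const.fun_mul ((continuous_const.fun_sub Complex.continuous_ofReal).fun_mul
              (hFσ z))).intervalIntegrable _ _)
            ((hFσ z).intervalIntegrable _ _),
          intervalIntegral.integral_const_mul]
      · rw [intervalIntegral.integral_const_mul]
    rw [hsplit] at this
    linear_combination this
  -- define P
  have hP : ∀ z, HasDerivAt (fun z => (z+1)^2 * G z) ((z+1) * H z) z := by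
    intro z
    have hpoly : HasDerivAt (fun z : ℂ => (z+1)^2) (2*(z+1)) z := by
      have : HasDerivAt (fun z : ℂ => z + 1) 1 z := (hasDerivAt_id z).add_const 1
      simpa using this.fun_pow 2
    have := hpoly.fun_mul (hG z)
    refine this.congr_deriv ?_
    have h4 := ftc2 z
    have hHz : H z = 2 * G z + (z+1) * G' z := by linear_combination -h4
    rw [hHz]; ring
  have hQ : ∀ z, HasDerivAt (fun z => (z+1) * H z) (F z) z := by
    intro z
    have hpoly : HasDerivAt (fun z : ℂ => z + 1) 1 z := (hasDerivAt_id z).add_const 1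
    have := hpoly.fun_mul (hH z)
    refine this.congr_deriv ?_
    have h3 := ftc1 z
    linear_combination h3
  have hderivP : deriv (fun z => (z+1)^2 * G z) = fun z => (z+1) * H z :=
    funext fun z => (hP z).deriv
  refine ⟨fun z => (z+1)^2 * G z, fun z => (hP z).differentiableAt, ?_, ?_, ?_, ?_, ?_⟩
  · rw [hderivP]; exact fun z => (hQ z).differentiableAt
  · intro z; rw [hderivP]; exact (hQ z).deriv
  · show ((-1:ℂ)+1)^2 * G (-1) = 0
    simp
  · rw [hderivP]
    show ((-1:ℂ)+1) * H (-1) = 0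
    simp
  -- the bound
  intro z C m hC hFb
  have hGb : ‖G z‖ ≤ C / (m+1) := by
    have hb : ∀ᵐ (t : ℝ) ∂(volume.restrict (Set.uIoc (0:ℝ) 1)),
        ‖(1 - (t:ℂ)) * F (σ z t)‖ ≤ C * t ^ m := by
      rw [ae_restrict_iff' measurableSet_uIoc]
      apply ae_of_all
      intro t ht
      rw [Set.uIoc_of_le (by norm_num : (0:ℝ) ≤ 1)] at ht
      rw [norm_mul]
      have h1 : ‖(1 - (t:ℂ))‖ ≤ 1 := by
        have : (1 - (t:ℂ)) = ((1 - t : ℝ) : ℂ) := by push_cast; ring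
        rw [this, Complex.norm_real, Real.norm_eq_abs, abs_le]
        constructor <;> [linarith [ht.2]; linarith [ht.1]]
      have h2 : ‖F (σ z t)‖ ≤ C * t ^ m := hFb t ⟨ht.1.le, ht.2⟩
      calc ‖(1 - (t:ℂ))‖ * ‖F (σ z t)‖ ≤ 1 * (C * t ^ m) :=
            mul_le_mul h1 h2 (norm_nonneg _) one_pos.le
        _ = C * t ^ m := one_mul _
    have := intervalIntegral.norm_integral_le_of_norm_le (g := fun t => C * t ^ m)
      (μ := volume) zero_le_one
      (by rw [← Set.uIoc_of_le zero_le_one, ← ae_restrict_iff' measurableSet_uIoc]; exact hb)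
      ((continuous_const.mul (continuous_pow m)).intervalIntegrable _ _)
    rw [intervalIntegral.integral_const_mul, integral_pow] at this
    rw [show ((1:ℝ) ^ (m + 1) - 0 ^ (m + 1)) / (m + 1) = (m+1:ℝ)⁻¹ by
      rw [one_pow, zero_pow (Nat.succ_ne_zero m)]; push_cast; ring] at this
    simpa [div_eq_mul_inv] using this
  have : ‖(z+1)^2 * G z‖ = ‖z+1‖^2 * ‖G z‖ := by
    rw [norm_mul, norm_pow]
  rw [this]
  calc ‖z+1‖^2 * ‖G z‖ ≤ ‖z+1‖^2 * (C / (m+1)) := by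
        apply mul_le_mul_of_nonneg_left hGb (by positivity)
    _ = C * ‖z+1‖^2 / (m+1) := by ring
open scoped Classical in
noncomputable def picomap (F : ℂ → ℂ) : ℂ → ℂ :=
  if hF : Differentiable ℂ F then Classical.choose (picardStep hF) else 0

lemma picomap_spec {F : ℂ → ℂ} (hF : Differentiable ℂ F) :
    Differentiable ℂ (picomap F) ∧ Differentiable ℂ (deriv (picomap F)) ∧
      (∀ z, deriv (deriv (picomap F)) z = F z) ∧ picomap F (-1) = 0 ∧
      deriv (picomap F) (-1) = 0 ∧
      ∀ (z : ℂ) (C : ℝ) (m : ℕ), 0 ≤ C →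
        (∀ t : ℝ, t ∈ Set.Icc (0:ℝ) 1 → ‖F (-1 + (t:ℂ) * (z+1))‖ ≤ C * t ^ m) →
        ‖picomap F z‖ ≤ C * ‖z+1‖^2 / (m+1) := by
  have hpe : picomap F = Classical.choose (picardStep hF) := dif_pos hF
  rw [hpe]
  exact Classical.choose_spec (picardStep hF)

noncomputable def useq (q : ℂ → ℂ) (α : ℂ) : ℕ → ℂ → ℂ
  | 0 => fun z => α * (z + 1)
  | n+1 => picomap (fun z => q z * useq q α n z)

section useqfacts
variable {q : ℂ → ℂ} {α : ℂ}

lemma useq_diff (hq : Differentiable ℂ q) : ∀ n, Differentiable ℂ (useq q α n) := by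
  intro n
  induction n with
  | zero =>
      show Differentiable ℂ (fun z => α * (z + 1))
      exact (differentiable_id.add_const 1).const_mul α
  | succ n ih =>
      exact (picomap_spec (hq.mul ih)).1

lemma useq_deriv_diff (hq : Differentiable ℂ q) : ∀ n, Differentiable ℂ (deriv (useq q α n)) := by
  intro n
  cases n with
  | zero =>
      have : deriv (useq q α 0) = fun _ => α := by
        funext z
        have : HasDerivAt (fun z : ℂ => α * (z + 1)) α z := by
          simpa using ((hasDerivAt_id z).add_const 1).const_mul α
        exact this.deriv
      rw [show useq q α 0 = fun z => α * (z+1) from rfl] at *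
      rw [this]
      exact differentiable_const α
  | succ n =>
      exact (picomap_spec (hq.mul (useq_diff hq n))).2.1

lemma useq_deriv2_succ (hq : Differentiable ℂ q) (n : ℕ) (z : ℂ) :
    deriv (deriv (useq q α (n+1))) z = q z * useq q α n z :=
  (picomap_spec (hq.mul (useq_diff hq n))).2.2.1 z

lemma useq_deriv2_zero (z : ℂ) : deriv (deriv (useq q α 0)) z = 0 := by
  have h0 : deriv (useq q α 0) = fun _ => α := by
    funext w
    have : HasDerivAt (fun z : ℂ => α * (z + 1)) α w := by
      simpa using ((hasDerivAt_id w).add_const 1).const_mul α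
    exact this.deriv
  rw [h0]
  simp

lemma useq_neg_one (hq : Differentiable ℂ q) : ∀ n, useq q α n (-1) = 0 := by
  intro n
  cases n with
  | zero => show α * ((-1) + 1) = 0; ring
  | succ n => exact (picomap_spec (hq.mul (useq_diff hq n))).2.2.2.1

lemma useq_deriv_neg_one_zero : deriv (useq q α 0) (-1) = α := by
  have : HasDerivAt (fun z : ℂ => α * (z + 1)) α (-1) := by
    simpa using ((hasDerivAt_id (-1:ℂ)).add_const 1).const_mul α
  exact this.deriv

lemma useq_deriv_neg_one_succ (hq : Differentiable ℂ q) (n : ℕ) : deriv (useq q α (n+1)) (-1) = 0 :=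
  (picomap_spec (hq.mul (useq_diff hq n))).2.2.2.2.1

/-- the key inductive bound -/
lemma useq_bound (hq : Differentiable ℂ q) {R K : ℝ} (hR : 0 ≤ R) (hK : 0 ≤ K)
    (hqK : ∀ w ∈ Metric.closedBall (-1:ℂ) R, ‖q w‖ ≤ K) :
    ∀ n, ∀ z ∈ Metric.closedBall (-1:ℂ) R,
      ‖useq q α n z‖ ≤ ‖α‖ * K^n / (2^n * n.factorial) * ‖z+1‖^(2*n+1) := by
  intro n
  induction n with
  | zero =>
      intro z hz
      show ‖α * (z+1)‖ ≤ _
      rw [norm_mul]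
      simp [pow_one]
  | succ n ih =>
      intro z hz
      have hz1 : ‖z + 1‖ ≤ R := by
        have := Metric.mem_closedBall.mp hz
        rwa [dist_eq_norm, show z - (-1) = z + 1 by ring] at this
      set cn : ℝ := ‖α‖ * K^n / (2^n * n.factorial) with hcn
      have hcn0 : 0 ≤ cn := by positivity
      have key := (picomap_spec (hq.fun_mul (useq_diff (α := α) hq n))).2.2.2.2.2 z
        ((K * cn) * ‖z+1‖^(2*n+1)) (2*n+1) (by positivity) ?_
      · calc ‖useq q α (n+1) z‖
            ≤ ((K * cn) * ‖z+1‖^(2*n+1)) * ‖z+1‖^2 / ((2*n+1 : ℕ)+1) := key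
          _ = ‖α‖ * K^(n+1) / (2^(n+1) * (n+1).factorial) * ‖z+1‖^(2*(n+1)+1) := by
              rw [hcn, Nat.factorial_succ]
              push_cast
              rw [show 2*(n+1)+1 = (2*n+1)+2 by ring, pow_add]
              field_simp
              ring
      · intro t ht
        have hσz : (-1 + (t:ℂ) * (z+1)) ∈ Metric.closedBall (-1:ℂ) R := by
          rw [Metric.mem_closedBall, dist_eq_norm,
            show -1 + (t:ℂ) * (z+1) - (-1) = (t:ℂ)*(z+1) by ring, norm_mul]
          calc ‖(t:ℂ)‖ * ‖z+1‖ ≤ 1 * R := by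
                apply mul_le_mul _ hz1 (norm_nonneg _) one_pos.le
                simpa [Complex.norm_real, Real.norm_eq_abs, abs_of_nonneg ht.1] using ht.2
            _ = R := one_mul R
        have hσ1 : ‖(-1 + (t:ℂ) * (z+1)) + 1‖ = t * ‖z+1‖ := by
          rw [show -1 + (t:ℂ) * (z+1) + 1 = (t:ℂ)*(z+1) by ring, norm_mul]
          simp [Complex.norm_real, Real.norm_eq_abs, abs_of_nonneg ht.1]
        rw [norm_mul]
        calc ‖q (-1 + (t:ℂ)*(z+1))‖ * ‖useq q α n (-1 + (t:ℂ)*(z+1))‖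
            ≤ K * (cn * ‖(-1 + (t:ℂ)*(z+1)) + 1‖^(2*n+1)) :=
              mul_le_mul (hqK _ hσz) (ih _ hσz) (norm_nonneg _) hK
          _ = (K * cn) * ‖z+1‖^(2*n+1) * t^(2*n+1) := by
              rw [hσ1, mul_pow]
              ring

end useqfacts
open Filter in
lemma existsEntireSol {q : ℂ → ℂ} (hq : Differentiable ℂ q) (α : ℂ) :
    ∃ U : ℂ → ℂ, Differentiable ℂ U ∧ Differentiable ℂ (deriv U) ∧
      (∀ z, deriv (deriv U) z = q z * U z) ∧ U (-1) = 0 ∧ deriv U (-1) = α := by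
  classical
  set S : ℕ → ℂ → ℂ := fun N z => ∑ n ∈ Finset.range N, useq q α n z with hSdef
  set Ufin : ℂ → ℂ := fun z => ∑' n, useq q α n z with hUdef
  have hSdiff : ∀ N, Differentiable ℂ (S N) :=
    fun N => Differentiable.fun_sum (fun i _ => useq_diff hq i)
  have htlu : TendstoLocallyUniformlyOn S Ufin atTop Set.univ := by
    rw [tendstoLocallyUniformlyOn_iff_forall_isCompact isOpen_univ]
    intro K hKuniv hK
    obtain ⟨R, hR0, hRsub⟩ := hK.isBounded.subset_closedBall_lt 0 (-1)
    obtain ⟨Kq, hKq⟩ := (isCompact_closedBall (-1:ℂ) R).exists_bound_of_continuousOn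
      hq.continuous.continuousOn
    have hKq0 : 0 ≤ Kq := le_trans (norm_nonneg _) (hKq (-1) (Metric.mem_closedBall_self hR0.le))
    set u : ℕ → ℝ := fun n => ‖α‖ * Kq^n / (2^n * n.factorial) * R^(2*n+1) with hu_def
    have hu : Summable u := by
      apply Summable.congr (((Real.summable_pow_div_factorial (Kq * R^2 / 2)).mul_left (‖α‖ * R)))
      intro n
      show _ = ‖α‖ * Kq^n / (2^n * n.factorial) * R^(2*n+1)
      have h1 : R^(2*n+1) = (R^2)^n * R := by rw [pow_add, pow_mul, pow_one]
      rw [h1, div_pow, mul_pow]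
      have h2 : ((n.factorial : ℝ)) ≠ 0 := Nat.cast_ne_zero.mpr n.factorial_ne_zero
      field_simp
    have hfu : ∀ (n : ℕ) (x : ℂ), x ∈ K → ‖useq q α n x‖ ≤ u n := by
      intro n x hx
      have hxball := hRsub hx
      have hx1 : ‖x + 1‖ ≤ R := by
        have := Metric.mem_closedBall.mp hxball
        rwa [dist_eq_norm, show x - (-1) = x + 1 by ring] at this
      calc ‖useq q α n x‖ ≤ ‖α‖ * Kq^n / (2^n * n.factorial) * ‖x+1‖^(2*n+1) :=
            useq_bound hq hR0.le hKq0 hKq n x hxball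
        _ ≤ ‖α‖ * Kq^n / (2^n * n.factorial) * R^(2*n+1) := by
            apply mul_le_mul_of_nonneg_left _ (by positivity)
            exact pow_le_pow_left₀ (norm_nonneg _) hx1 _
    exact tendstoUniformlyOn_tsum_nat hu hfu
  have hSdiffOn : ∀ᶠ N in atTop, DifferentiableOn ℂ (S N) Set.univ :=
    Filter.Eventually.of_forall fun N => (hSdiff N).differentiableOn
  have hUdiff : Differentiable ℂ Ufin :=
    differentiableOn_univ.mp (htlu.differentiableOn hSdiffOn isOpen_univ)
  have hderivS : ∀ N, deriv (S N) = fun z => ∑ n ∈ Finset.range N, deriv (useq q α n) z :=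
    fun N => funext fun z => deriv_fun_sum (fun i _ => (useq_diff hq i).differentiableAt)
  have hdSdiff : ∀ N, Differentiable ℂ (deriv (S N)) := by
    intro N
    rw [hderivS N]
    exact Differentiable.fun_sum fun i _ => useq_deriv_diff hq i
  have htlu2 : TendstoLocallyUniformlyOn (deriv ∘ S) (deriv Ufin) atTop Set.univ :=
    htlu.deriv hSdiffOn isOpen_univ
  have hdSdiffOn : ∀ᶠ N in atTop, DifferentiableOn ℂ ((deriv ∘ S) N) Set.univ :=
    Filter.Eventually.of_forall fun N => (hdSdiff N).differentiableOn
  have hdUdiff : Differentiable ℂ (deriv Ufin) :=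
    differentiableOn_univ.mp (htlu2.differentiableOn hdSdiffOn isOpen_univ)
  have htlu3 : TendstoLocallyUniformlyOn (deriv ∘ (deriv ∘ S)) (deriv (deriv Ufin)) atTop Set.univ :=
    htlu2.deriv hdSdiffOn isOpen_univ
  have hS2 : ∀ N z, deriv (deriv (S (N+1))) z = q z * S N z := by
    intro N z
    rw [hderivS (N+1), deriv_fun_sum (fun i _ => (useq_deriv_diff hq i).differentiableAt),
      Finset.sum_range_succ']
    simp only [useq_deriv2_succ hq, useq_deriv2_zero, add_zero]
    rw [← Finset.mul_sum]
  have hlim : ∀ z, deriv (deriv Ufin) z = q z * Ufin z := by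
    intro z
    have h1 : Filter.Tendsto (fun N => deriv (deriv (S N)) z) atTop (nhds (deriv (deriv Ufin) z)) :=
      htlu3.tendsto_at (Set.mem_univ z)
    have h2 := h1.comp (Filter.tendsto_add_atTop_nat 1)
    have h3 : Filter.Tendsto (fun N => q z * S N z) atTop (nhds (q z * Ufin z)) :=
      (htlu.tendsto_at (Set.mem_univ z)).const_mul _
    have h4 : ((fun N => deriv (deriv (S N)) z) ∘ (fun N => N + 1)) = fun N => q z * S N z :=
      funext fun N => hS2 N z
    rw [h4] at h2
    exact tendsto_nhds_unique h2 h3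
  have hU0 : Ufin (-1) = 0 := by
    have h : ∀ n, useq q α n (-1) = (0:ℂ) := useq_neg_one hq
    calc Ufin (-1) = ∑' (n : ℕ), useq q α n (-1) := rfl
      _ = ∑' (_ : ℕ), (0:ℂ) := tsum_congr h
      _ = 0 := tsum_zero
  have hU'0 : deriv Ufin (-1) = α := by
    have h1 : Filter.Tendsto (fun N => deriv (S N) (-1)) atTop (nhds (deriv Ufin (-1))) :=
      htlu2.tendsto_at (Set.mem_univ (-1))
    have h2 := h1.comp (Filter.tendsto_add_atTop_nat 1)
    have h4 : ((fun N => deriv (S N) (-1)) ∘ (fun N => N + 1)) = fun _ => α := by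
      funext N
      show deriv (S (N+1)) (-1) = α
      rw [hderivS (N+1)]
      show (∑ n ∈ Finset.range (N+1), deriv (useq q α n) (-1)) = α
      rw [Finset.sum_range_succ']
      simp only [useq_deriv_neg_one_succ hq, useq_deriv_neg_one_zero, Finset.sum_const_zero,
        zero_add]
    rw [h4] at h2
    exact tendsto_nhds_unique h2 tendsto_const_nhds
  exact ⟨Ufin, hUdiff, hdUdiff, hlim, hU0, hU'0⟩
/-- constancy of γ on subintervals where γ' vanishes -/
lemma gamma_const {γ γ' : ℝ → ℂ} {a b : ℝ} (hab : a ≤ b) (ha : 0 ≤ a) (hb : b ≤ 1)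
    (hγ : ∀ t ∈ Set.Icc (0:ℝ) 1, HasDerivWithinAt γ (γ' t) (Set.Icc (0:ℝ) 1) t)
    (hz : ∀ t ∈ Set.Ico a b, γ' t = 0) : ∀ t ∈ Set.Icc a b, γ t = γ a := by
  have hsub : Set.Icc a b ⊆ Set.Icc (0:ℝ) 1 := Set.Icc_subset_Icc ha hb
  apply constant_of_has_deriv_right_zero
  · exact fun t ht => ((hγ t (hsub ht)).mono hsub).continuousWithinAt
  · intro t ht
    have h1 : HasDerivWithinAt γ (γ' t) (Set.Icc a b) t := (hγ t (hsub ⟨ht.1, ht.2.le⟩)).mono hsub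
    have h2 : HasDerivWithinAt γ (γ' t) (Set.Ici t) t :=
      h1.mono_of_mem_nhdsWithin (Icc_mem_nhdsGE_of_mem ht)
    rw [hz t ht] at h2
    exact h2

/-- the square root branch along the path is bounded below by `d` -/
lemma s_lower {W : ℂ → ℂ} {γ γ' s : ℝ → ℂ} {d : ℝ}
    (hγ : ∀ t ∈ Set.Icc (0:ℝ) 1, HasDerivWithinAt γ (γ' t) (Set.Icc (0:ℝ) 1) t)
    (hγ0 : γ 0 = -1) (hγ1 : γ 1 = 1)
    (hs : ContinuousOn s (Set.Icc (0:ℝ) 1))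
    (hsq : ∀ t ∈ Set.Icc (0:ℝ) 1, s t ^ 2 = W (γ t))
    (hd : 0 < d)
    (hprog : ∀ t ∈ Set.Icc (0:ℝ) 1, d * ‖γ' t‖ ≤ (s t * γ' t).re) :
    ∀ t ∈ Set.Icc (0:ℝ) 1, d ≤ ‖s t‖ := by
  -- first : γ' vanishes wherever |s| < d
  have hvan : ∀ τ ∈ Set.Icc (0:ℝ) 1, ‖s τ‖ < d → γ' τ = 0 := by
    intro τ hτ hlt
    by_contra hne
    have habs : 0 < ‖γ' τ‖ := by
      simpa [norm_pos_iff] using hne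
    have h1 : (s τ * γ' τ).re ≤ ‖s τ‖ * ‖γ' τ‖ := by
      calc (s τ * γ' τ).re ≤ ‖s τ * γ' τ‖ := Complex.re_le_norm _
        _ = ‖s τ‖ * ‖γ' τ‖ := norm_mul _ _
    have h2 := hprog τ hτ
    nlinarith
  -- |s| is determined by γ through W
  have habs_eq : ∀ τ₁ ∈ Set.Icc (0:ℝ) 1, ∀ τ₂ ∈ Set.Icc (0:ℝ) 1, γ τ₁ = γ τ₂ →
      ‖s τ₁‖ = ‖s τ₂‖ := by
    intro τ₁ h1 τ₂ h2 hγeq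
    have e1 : ‖s τ₁‖ ^ 2 = ‖W (γ τ₁)‖ := by
      rw [← hsq τ₁ h1, norm_pow]
    have e2 : ‖s τ₂‖ ^ 2 = ‖W (γ τ₂)‖ := by
      rw [← hsq τ₂ h2, norm_pow]
    rw [hγeq] at e1
    have := e1.trans e2.symm
    nlinarith [norm_nonneg (s τ₁), norm_nonneg (s τ₂)]
  -- main argument
  intro t₀ ht₀
  by_contra hlt
  push_neg at hlt
  -- rightward claim : γ 1 = γ t₀
  have right : γ 1 = γ t₀ := by
    set T : Set ℝ := {τ | τ ∈ Set.Icc t₀ 1 ∧ d ≤ ‖s τ‖} with hT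
    by_cases hTe : T.Nonempty
    · exfalso
      have hTclosed : IsClosed T := by
        have : T = Set.Icc t₀ 1 ∩ ((fun τ => ‖s τ‖) ⁻¹' Set.Ici d) := by
          ext τ; exact Iff.rfl
        rw [this]
        apply ContinuousOn.preimage_isClosed_of_isClosed
          ((continuous_norm.comp_continuousOn
            (hs.mono (Set.Icc_subset_Icc ht₀.1 le_rfl))))
          isClosed_Icc isClosed_Ici
      have hbdd : BddBelow T := ⟨t₀, fun τ hτ => hτ.1.1⟩
      set b := sInf T with hb
      have hbT : b ∈ T := hTclosed.csInf_mem hTe hbdd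
      have hbt₀ : t₀ < b := by
        rcases lt_or_eq_of_le hbT.1.1 with h | h
        · exact h
        · exfalso; rw [← h] at hbT; linarith [hbT.2, hlt]
      have hIco : ∀ τ ∈ Set.Ico t₀ b, γ' τ = 0 := by
        intro τ hτ
        have hτI : τ ∈ Set.Icc (0:ℝ) 1 := ⟨le_trans ht₀.1 hτ.1, le_trans hτ.2.le hbT.1.2⟩
        apply hvan τ hτI
        by_contra hge
        push_neg at hge
        have : τ ∈ T := ⟨⟨hτ.1, le_trans hτ.2.le hbT.1.2⟩, hge⟩
        have := csInf_le hbdd this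
        linarith [hτ.2]
      have hconst := gamma_const (le_of_lt hbt₀) ht₀.1 hbT.1.2 hγ hIco
      have hγb : γ b = γ t₀ := by
        rw [hconst b ⟨le_of_lt hbt₀, le_rfl⟩]
      have : ‖s b‖ = ‖s t₀‖ :=
        habs_eq b ⟨le_trans ht₀.1 hbT.1.1, hbT.1.2⟩ t₀ ht₀ hγb
      have h2 := hbT.2
      rw [this] at h2
      linarith
    · -- T empty : |s| < d on [t₀,1], so γ' = 0 there
      have hIco : ∀ τ ∈ Set.Ico t₀ 1, γ' τ = 0 := by
        intro τ hτ
        have hτI : τ ∈ Set.Icc (0:ℝ) 1 := ⟨le_trans ht₀.1 hτ.1, hτ.2.le⟩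
        apply hvan τ hτI
        by_contra hge
        push_neg at hge
        exact hTe ⟨τ, ⟨hτ.1, hτ.2.le⟩, hge⟩
      have hconst := gamma_const ht₀.2 ht₀.1 le_rfl hγ hIco
      exact hconst 1 ⟨ht₀.2, le_rfl⟩
  -- leftward claim : γ t₀ = γ 0
  have left : γ t₀ = γ 0 := by
    set T : Set ℝ := {τ | τ ∈ Set.Icc 0 t₀ ∧ d ≤ ‖s τ‖} with hT
    by_cases hTe : T.Nonempty
    · exfalso
      have hTclosed : IsClosed T := by
        have : T = Set.Icc 0 t₀ ∩ ((fun τ => ‖s τ‖) ⁻¹' Set.Ici d) := by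
          ext τ; exact Iff.rfl
        rw [this]
        apply ContinuousOn.preimage_isClosed_of_isClosed
          ((continuous_norm.comp_continuousOn
            (hs.mono (Set.Icc_subset_Icc le_rfl ht₀.2))))
          isClosed_Icc isClosed_Ici
      have hbdd : BddAbove T := ⟨t₀, fun τ hτ => hτ.1.2⟩
      set b := sSup T with hb
      have hbT : b ∈ T := hTclosed.csSup_mem hTe hbdd
      have hbt₀ : b < t₀ := by
        rcases lt_or_eq_of_le hbT.1.2 with h | h
        · exact h
        · exfalso; rw [h] at hbT; linarith [hbT.2, hlt]
      have hIoc : ∀ τ ∈ Set.Ioc b t₀, γ' τ = 0 := by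
        intro τ hτ
        have hτI : τ ∈ Set.Icc (0:ℝ) 1 := ⟨le_trans hbT.1.1 hτ.1.le, le_trans hτ.2 ht₀.2⟩
        apply hvan τ hτI
        by_contra hge
        push_neg at hge
        have : τ ∈ T := ⟨⟨le_trans hbT.1.1 hτ.1.le, hτ.2⟩, hge⟩
        have := le_csSup hbdd this
        linarith [hτ.1]
      -- γ is constant = γ t₀ on (b, t₀], and γ b is the limit
      have hconst : ∀ c ∈ Set.Ioc b t₀, γ t₀ = γ c := by
        intro c hc
        have h1 : ∀ τ ∈ Set.Ico c t₀, γ' τ = 0 :=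
          fun τ hτ => hIoc τ ⟨lt_of_lt_of_le hc.1 hτ.1, hτ.2.le⟩
        have := gamma_const hc.2 (le_trans hbT.1.1 hc.1.le) ht₀.2 hγ h1
        exact this t₀ ⟨hc.2, le_rfl⟩
      have hγb : γ b = γ t₀ := by
        have hcont : ContinuousWithinAt γ (Set.Icc (0:ℝ) 1) b :=
          (hγ b ⟨hbT.1.1, le_trans hbT.1.2 ht₀.2⟩).continuousWithinAt
        have hsub2 : Set.Ioc b t₀ ⊆ Set.Icc (0:ℝ) 1 :=
          fun τ hτ => ⟨le_trans hbT.1.1 hτ.1.le, le_trans hτ.2 ht₀.2⟩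
        have hTend : Filter.Tendsto γ (nhdsWithin b (Set.Ioc b t₀)) (nhds (γ b)) :=
          hcont.mono hsub2
        have hEq : ∀ᶠ τ in nhdsWithin b (Set.Ioc b t₀), γ τ = γ t₀ := by
          filter_upwards [self_mem_nhdsWithin] with τ hτ
          exact (hconst τ hτ).symm
        have hTend2 : Filter.Tendsto γ (nhdsWithin b (Set.Ioc b t₀)) (nhds (γ t₀)) := by
          rw [Filter.tendsto_congr' hEq]
          exact tendsto_const_nhds
        have : (nhdsWithin b (Set.Ioc b t₀)).NeBot := by
          rw [nhdsWithin_Ioc_eq_nhdsGT hbt₀]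
          exact nhdsGT_neBot b
        exact tendsto_nhds_unique hTend hTend2
      have : ‖s b‖ = ‖s t₀‖ :=
        habs_eq b ⟨hbT.1.1, le_trans hbT.1.2 ht₀.2⟩ t₀ ht₀ hγb
      have h2 := hbT.2
      rw [this] at h2
      linarith
    · have hIco : ∀ τ ∈ Set.Ico 0 t₀, γ' τ = 0 := by
        intro τ hτ
        have hτI : τ ∈ Set.Icc (0:ℝ) 1 := ⟨hτ.1, le_trans hτ.2.le ht₀.2⟩
        apply hvan τ hτI
        by_contra hge
        push_neg at hge
        exact hTe ⟨τ, ⟨hτ.1, hτ.2.le⟩, hge⟩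
      have hconst := gamma_const ht₀.1 le_rfl ht₀.2 hγ hIco
      exact hconst t₀ ⟨ht₀.1, le_rfl⟩
  rw [left] at right
  rw [hγ0, hγ1] at right
  norm_num at right
/-- the branch `s` of `√(V∘γ - E)` is differentiable wherever it does not vanish -/
lemma s_hasDeriv {V : ℂ → ℂ} (hV : Differentiable ℂ V) {E : ℂ} {γ γ' s : ℝ → ℂ}
    (hγ : ∀ t ∈ Set.Icc (0:ℝ) 1, HasDerivWithinAt γ (γ' t) (Set.Icc (0:ℝ) 1) t)
    (hs : ContinuousOn s (Set.Icc (0:ℝ) 1))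
    (hsq : ∀ t ∈ Set.Icc (0:ℝ) 1, s t ^ 2 = V (γ t) - E)
    (t₀ : ℝ) (ht₀ : t₀ ∈ Set.Icc (0:ℝ) 1) (hne : s t₀ ≠ 0) :
    HasDerivWithinAt s (deriv V (γ t₀) * γ' t₀ / (2 * s t₀)) (Set.Icc (0:ℝ) 1) t₀ := by
  classical
  set z₀ : ℂ := s t₀ with hz₀
  have hz₀sq : z₀ ^ 2 ≠ 0 := pow_ne_zero 2 hne
  set g : ℂ → ℂ := fun z => z₀ * Complex.exp ((1/2 : ℂ) * Complex.log (z / z₀^2)) with hgdef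
  -- facts about g on the ball around z₀²
  have hslit : ∀ z : ℂ, ‖z - z₀^2‖ < ‖z₀^2‖ →
      z / z₀^2 ∈ Complex.slitPlane := by
    intro z hz
    rw [Complex.mem_slitPlane_iff]
    left
    have h1 : ‖z / z₀^2 - 1‖ < 1 := by
      rw [show z / z₀^2 - 1 = (z - z₀^2) / z₀^2 by field_simp, norm_div]
      rw [div_lt_one (norm_pos_iff.mpr hz₀sq)]
      exact hz
    have h2 : |(z / z₀^2 - 1).re| ≤ ‖z / z₀^2 - 1‖ := Complex.abs_re_le_norm _
    have h3 : (z / z₀^2 - 1).re = (z / z₀^2).re - 1 := by simp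
    have := abs_lt.mp (lt_of_le_of_lt h2 h1)
    linarith [this.1]
  have hgsq : ∀ z : ℂ, ‖z - z₀^2‖ < ‖z₀^2‖ → g z ^ 2 = z := by
    intro z hz
    have hz0 : z ≠ 0 := by
      intro h
      rw [h, zero_sub, norm_neg] at hz
      exact lt_irrefl _ hz
    have hrat : z / z₀^2 ≠ 0 := div_ne_zero hz0 hz₀sq
    rw [hgdef]
    show (z₀ * Complex.exp ((1/2 : ℂ) * Complex.log (z / z₀^2))) ^ 2 = z
    rw [mul_pow, ← Complex.exp_nat_mul]
    have : (2 : ℕ) * ((1/2 : ℂ) * Complex.log (z / z₀^2)) = Complex.log (z / z₀^2) := by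
      push_cast; ring
    rw [this, Complex.exp_log hrat]
    field_simp
  have hgz₀ : g (z₀^2) = z₀ := by
    rw [hgdef]
    show z₀ * Complex.exp ((1/2 : ℂ) * Complex.log (z₀^2 / z₀^2)) = z₀
    rw [div_self hz₀sq, Complex.log_one]
    simp
  have hgderiv : HasDerivAt g (g (z₀^2) / (2 * z₀^2)) (z₀^2) := by
    have hmem : ((z₀^2 : ℂ) / z₀^2) ∈ Complex.slitPlane := by
      rw [div_self hz₀sq]
      rw [Complex.mem_slitPlane_iff]
      left
      norm_num
    have hinner : HasDerivAt (fun z : ℂ => z / z₀^2) ((z₀^2)⁻¹) (z₀^2) := by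
      simpa [div_eq_mul_inv] using (hasDerivAt_id (z₀^2 : ℂ)).mul_const ((z₀^2)⁻¹)
    have hlog : HasDerivAt (fun z : ℂ => Complex.log (z / z₀^2))
        ((z₀^2)⁻¹ / ((z₀^2 : ℂ) / z₀^2)) (z₀^2) := hinner.clog hmem
    rw [div_self hz₀sq, div_one] at hlog
    have hexp := (hlog.const_mul (1/2 : ℂ)).cexp
    have := hexp.const_mul z₀
    refine this.congr_deriv ?_
    symm
    show g (z₀^2) / (2 * z₀^2)
        = z₀ * (Complex.exp ((1/2 : ℂ) * Complex.log (z₀^2 / z₀^2)) * ((1/2 : ℂ) * (z₀^2)⁻¹))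
    rw [show g (z₀^2) = z₀ * Complex.exp ((1/2 : ℂ) * Complex.log (z₀^2 / z₀^2)) from rfl]
    field_simp
  have hgcont : ContinuousAt g (z₀^2) := hgderiv.differentiableAt.continuousAt
  -- choose δ for continuity of g
  obtain ⟨δ, hδ0, hδ⟩ := Metric.continuousAt_iff.mp hgcont (‖z₀‖)
    (norm_pos_iff.mpr hne)
  -- F = V ∘ γ - E along the path
  set F : ℝ → ℂ := fun τ => V (γ τ) - E with hFdef
  have hFt₀ : F t₀ = z₀^2 := by rw [hFdef]; exact (hsq t₀ ht₀).symm
  have hFderiv : HasDerivWithinAt F (deriv V (γ t₀) * γ' t₀) (Set.Icc (0:ℝ) 1) t₀ := by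
    have h1 : HasDerivAt V (deriv V (γ t₀)) (γ t₀) := (hV (γ t₀)).hasDerivAt
    have h2 := HasDerivWithinAt.scomp (𝕜 := ℝ) (𝕜' := ℂ) t₀ h1.hasDerivWithinAt (hγ t₀ ht₀)
      (Set.mapsTo_univ _ _)
    have h3 := h2.sub_const E
    simpa [smul_eq_mul, mul_comm, hFdef] using h3
  have hFcont : ContinuousWithinAt F (Set.Icc (0:ℝ) 1) t₀ := hFderiv.continuousWithinAt
  have hscont : ContinuousWithinAt s (Set.Icc (0:ℝ) 1) t₀ := hs t₀ ht₀
  -- choose a neighborhood where everything is controlled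
  set ε : ℝ := min δ (‖z₀^2‖) with hε
  have hε0 : 0 < ε := lt_min hδ0 (norm_pos_iff.mpr hz₀sq)
  have hF_ev : ∀ᶠ τ in nhdsWithin t₀ (Set.Icc (0:ℝ) 1), ‖F τ - z₀^2‖ < ε := by
    have := hFcont.tendsto (Metric.ball_mem_nhds (F t₀) hε0)
    rw [hFt₀] at this
    filter_upwards [this] with τ hτ
    rw [Set.mem_preimage, Metric.mem_ball, Complex.dist_eq] at hτ
    exact hτ
  have hs_ev : ∀ᶠ τ in nhdsWithin t₀ (Set.Icc (0:ℝ) 1), ‖s τ - z₀‖ < ‖z₀‖ := by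
    have := hscont.tendsto (Metric.ball_mem_nhds (s t₀) (norm_pos_iff.mpr hne))
    filter_upwards [this] with τ hτ
    rw [Set.mem_preimage, Metric.mem_ball, Complex.dist_eq] at hτ
    exact hτ
  have hmem_ev : ∀ᶠ τ in nhdsWithin t₀ (Set.Icc (0:ℝ) 1), τ ∈ Set.Icc (0:ℝ) 1 :=
    self_mem_nhdsWithin
  -- on this neighborhood, s = g ∘ F
  have hkey : ∀ᶠ τ in nhdsWithin t₀ (Set.Icc (0:ℝ) 1), g (F τ) = s τ := by
    filter_upwards [hF_ev, hs_ev, hmem_ev] with τ h1 h2 h3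
    have hFball : ‖F τ - z₀^2‖ < ‖z₀^2‖ :=
      lt_of_lt_of_le h1 (min_le_right _ _)
    have hsq2 : g (F τ) ^ 2 = s τ ^ 2 := by
      rw [hgsq (F τ) hFball, hsq τ h3]
    have hgclose : ‖g (F τ) - z₀‖ < ‖z₀‖ := by
      have hd1 : dist (F τ) (z₀^2) < δ := by
        rw [Complex.dist_eq]
        exact lt_of_lt_of_le h1 (min_le_left _ _)
      have := hδ hd1
      rwa [Complex.dist_eq, hgz₀] at this
    rcases (Commute.all (g (F τ)) (s τ)).sq_eq_sq_iff_eq_or_eq_neg.mp hsq2 with h | h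
    · exact h
    · exfalso
      have : ‖g (F τ) - z₀‖ = ‖s τ + z₀‖ := by
        rw [h]
        rw [show -s τ - z₀ = -(s τ + z₀) by ring, norm_neg]
      rw [this] at hgclose
      have h4 : ‖s τ + z₀‖ ≥ 2 * ‖z₀‖ - ‖s τ - z₀‖ := by
        have := norm_add_le (s τ + z₀) (z₀ - s τ)
        have h5 : ‖z₀ - s τ‖ = ‖s τ - z₀‖ := by
          rw [show z₀ - s τ = -(s τ - z₀) by ring, norm_neg]
        have h6 : (s τ + z₀) + (z₀ - s τ) = 2 * z₀ := by ring
        rw [h6, h5] at this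
        have h7 : ‖2 * z₀‖ = 2 * ‖z₀‖ := by
          rw [norm_mul]; norm_num
        linarith [h7 ▸ this]
      linarith
  -- conclude via chain rule and congruence
  have hcomp : HasDerivWithinAt (fun τ => g (F τ))
      ((deriv V (γ t₀) * γ' t₀) • (g (z₀^2) / (2 * z₀^2))) (Set.Icc (0:ℝ) 1) t₀ := by
    have hgd2 : HasDerivAt g (g (z₀^2) / (2 * z₀^2)) (F t₀) := by rw [hFt₀]; exact hgderiv
    have := HasDerivWithinAt.scomp (𝕜 := ℝ) (𝕜' := ℂ) t₀
      (hgd2.hasDerivWithinAt (s := Set.univ)) hFderiv (Set.mapsTo_univ _ _)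
    simpa [Function.comp_def] using this
  have heq : ((deriv V (γ t₀) * γ' t₀) • (g (z₀^2) / (2 * z₀^2)))
      = deriv V (γ t₀) * γ' t₀ / (2 * s t₀) := by
    rw [hgz₀, smul_eq_mul, ← hz₀]
    field_simp
  rw [heq] at hcomp
  apply hcomp.congr_of_eventuallyEq (hkey.mono fun τ h => h.symm)
  rw [hFt₀, hgz₀]
/-- derivative of `normSq ∘ f` -/
lemma normSq_hasDeriv {f : ℝ → ℂ} {ft' : ℂ} {S : Set ℝ} {t : ℝ}
    (hf : HasDerivWithinAt f ft' S t) :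
    HasDerivWithinAt (fun τ => Complex.normSq (f τ)) (2 * ((starRingEnd ℂ) (f t) * ft').re) S t := by
  have hre : HasDerivWithinAt (fun τ => (f τ).re) ft'.re S t :=
    (Complex.reCLM.hasFDerivAt.comp_hasDerivWithinAt t hf)
  have him : HasDerivWithinAt (fun τ => (f τ).im) ft'.im S t :=
    (Complex.imCLM.hasFDerivAt.comp_hasDerivWithinAt t hf)
  have h := (hre.fun_mul hre).fun_add (him.fun_mul him)
  have heq : (fun τ => Complex.normSq (f τ)) = fun τ => (f τ).re * (f τ).re + (f τ).im * (f τ).im := by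
    funext τ
    rw [Complex.normSq_apply]
  rw [heq]
  refine h.congr_deriv ?_
  simp [Complex.mul_re, Complex.conj_re, Complex.conj_im]
  ring
/-- `u`, with derivative `u'` and second derivative `u''` on `[-1,1]`, is a twice
continuously differentiable solution of the Dirichlet problem
`-h²u'' + W·u = E·u` on `[-1,1]`, `u(-1) = u(1) = 0`. -/
def IsDirichletSol (h : ℝ) (W : ℝ → ℂ) (E : ℂ) (u u' u'' : ℝ → ℂ) : Prop :=
  (∀ x ∈ Set.Icc (-1:ℝ) 1, HasDerivWithinAt u (u' x) (Set.Icc (-1:ℝ) 1) x) ∧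
  (∀ x ∈ Set.Icc (-1:ℝ) 1, HasDerivWithinAt u' (u'' x) (Set.Icc (-1:ℝ) 1) x) ∧
  ContinuousOn u'' (Set.Icc (-1:ℝ) 1) ∧
  (∀ x ∈ Set.Icc (-1:ℝ) 1, -(h:ℂ)^2 * u'' x + W x * u x = E * u x) ∧
  u (-1) = 0 ∧ u 1 = 0
lemma mul_ofReal_re (z : ℂ) (r : ℝ) : (z * (r:ℂ)).re = z.re * r := by
  simp [Complex.mul_re]

lemma div_ofReal_re' (z : ℂ) (r : ℝ) : (z / (r:ℂ)).re = z.re / r := by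
  rw [div_eq_mul_inv, ← Complex.ofReal_inv, mul_ofReal_re, div_eq_mul_inv]

/-- quantitative non-existence of eigenvalues along a progressive path
(Theorem `mainbis` of the paper, case δ = 0): if `E` admits a progressive path with
margin `d`, then `E` is not a Dirichlet eigenvalue of `-h²d²/dx² + V` once `h ≤ c·d⁷`. -/
theorem stmt2 (M : ℝ) (hM : 0 < M) :
    ∃ c : ℝ, 0 < c ∧
      ∀ (V : ℂ → ℂ), Differentiable ℂ V →
      ∀ (E : ℂ) (γ γ' s : ℝ → ℂ) (d : ℝ),
      (∀ t ∈ Set.Icc (0:ℝ) 1, HasDerivWithinAt γ (γ' t) (Set.Icc (0:ℝ) 1) t) →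
      ContinuousOn γ' (Set.Icc (0:ℝ) 1) →
      γ 0 = -1 → γ 1 = 1 →
      (∫ t in (0:ℝ)..1, ‖γ' t‖) ≤ M →
      ContinuousOn s (Set.Icc (0:ℝ) 1) →
      (∀ t ∈ Set.Icc (0:ℝ) 1, s t ^ 2 = V (γ t) - E) →
      0 < d → d ≤ 1 →
      (∀ t ∈ Set.Icc (0:ℝ) 1, d * ‖γ' t‖ ≤ (s t * γ' t).re) →
      (∀ t ∈ Set.Icc (0:ℝ) 1, ‖deriv V (γ t)‖ ≤ M) →
      ∀ h : ℝ, 0 < h → h ≤ c * d ^ 7 →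
      ∀ u u' u'' : ℝ → ℂ, IsDirichletSol h (fun x : ℝ => V (x : ℂ)) E u u' u'' →
      ∀ x ∈ Set.Icc (-1:ℝ) 1, u x = 0 := by
  refine ⟨1/(2*M), by positivity, ?_⟩
  intro V hV E γ γ' s d hγ hγ'c hγ0 hγ1 _hlen hscont hsq hd0 hd1 hprog hVb h hh0 hhc
    u u' u'' hu
  obtain ⟨hu1, hu2, _hu3, hode, hub0, hub1⟩ := hu
  have hhne : (h:ℂ) ≠ 0 := by
    simp only [ne_eq, Complex.ofReal_eq_zero]
    exact ne_of_gt hh0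
  have hh2ne : ((h:ℂ))^2 ≠ 0 := pow_ne_zero _ hhne
  -- the rescaled potential
  set q : ℂ → ℂ := fun z => (V z - E) / (h:ℂ)^2 with hqdef
  have hq : Differentiable ℂ q := (hV.sub_const E).div_const _
  have hode' : ∀ x ∈ Set.Icc (-1:ℝ) 1, u'' x = q (x:ℂ) * u x := by
    intro x hx
    have h1 := hode x hx
    have : u'' x = (V (x:ℂ) - E) * u x / (h:ℂ)^2 := by
      field_simp
      linear_combination -h1
    rw [this, hqdef]
    ring
  -- a bound for q on the segment
  obtain ⟨CV, hCV⟩ := (((isCompact_Icc (a := (-1:ℝ)) (b := 1)).image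
    Complex.continuous_ofReal)).exists_bound_of_continuousOn hq.continuous.continuousOn
  -- the entire solution with matching Cauchy data at -1
  set α : ℂ := u' (-1) with hα
  obtain ⟨U, hU1, hU2, hU3, hU4, hU5⟩ := existsEntireSol hq α
  -- u agrees with U on [-1,1]
  have hUcomp : ∀ x : ℝ, HasDerivAt (fun x : ℝ => U (x:ℂ)) (deriv U (x:ℂ)) x := by
    intro x
    have h1 : HasDerivAt U (deriv U (x:ℂ)) (x:ℂ) := (hU1 _).hasDerivAt
    have h2 : HasDerivAt (fun x : ℝ => (x:ℂ)) 1 x := by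
      simpa using (hasDerivAt_id x).ofReal_comp
    have := HasDerivAt.scomp (𝕜 := ℝ) (𝕜' := ℂ) x h1 h2
    simpa [Function.comp_def] using this
  have hU'comp : ∀ x : ℝ, HasDerivAt (fun x : ℝ => deriv U (x:ℂ)) (q (x:ℂ) * U (x:ℂ)) x := by
    intro x
    have h1 : HasDerivAt (deriv U) (q (x:ℂ) * U (x:ℂ)) (x:ℂ) := by
      have := (hU2 (x:ℂ)).hasDerivAt
      rwa [hU3 (x:ℂ)] at this
    have h2 : HasDerivAt (fun x : ℝ => (x:ℂ)) 1 x := by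
      simpa using (hasDerivAt_id x).ofReal_comp
    have := HasDerivAt.scomp (𝕜 := ℝ) (𝕜' := ℂ) x h1 h2
    simpa [Function.comp_def] using this
  have main3 : ∀ x ∈ Set.Icc (-1:ℝ) 1, u x = U (x:ℂ) ∧ u' x = deriv U (x:ℂ) := by
    set y : ℝ → ℂ × ℂ := fun x => (u x - U (x:ℂ), u' x - deriv U (x:ℂ)) with hy
    set y' : ℝ → ℂ × ℂ := fun x => (u' x - deriv U (x:ℂ), u'' x - q (x:ℂ) * U (x:ℂ)) with hy'
    have hyd : ∀ x ∈ Set.Icc (-1:ℝ) 1, HasDerivWithinAt y (y' x) (Set.Icc (-1:ℝ) 1) x :=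
      fun x hx => ((hu1 x hx).sub (hUcomp x).hasDerivWithinAt).prodMk
        ((hu2 x hx).sub (hU'comp x).hasDerivWithinAt)
    have hbound : ∀ x ∈ Set.Icc (-1:ℝ) 1, ‖y' x‖ ≤ (max 1 CV) * ‖y x‖ := by
      intro x hx
      have hsnd : u'' x - q (x:ℂ) * U (x:ℂ) = q (x:ℂ) * (u x - U (x:ℂ)) := by
        rw [hode' x hx]; ring
      have hCVx : ‖q (x:ℂ)‖ ≤ CV := hCV _ ⟨x, hx, rfl⟩
      rw [Prod.norm_def]
      apply max_le
      · show ‖u' x - deriv U (x:ℂ)‖ ≤ _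
        calc ‖u' x - deriv U (x:ℂ)‖ = ‖(y x).2‖ := rfl
          _ ≤ ‖y x‖ := norm_snd_le (y x)
          _ ≤ max 1 CV * ‖y x‖ := by nlinarith [norm_nonneg (y x), le_max_left 1 CV]
      · show ‖u'' x - q (x:ℂ) * U (x:ℂ)‖ ≤ _
        rw [hsnd, norm_mul]
        calc ‖q (x:ℂ)‖ * ‖u x - U (x:ℂ)‖ ≤ CV * ‖(y x).1‖ :=
              mul_le_mul_of_nonneg_right hCVx (norm_nonneg _) |>.trans (le_refl _)
          _ ≤ CV * ‖y x‖ := by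
              have := norm_fst_le (y x)
              have hCV0 : (0:ℝ) ≤ CV := le_trans (norm_nonneg _) hCVx
              nlinarith
          _ ≤ max 1 CV * ‖y x‖ := by
              have := le_max_right 1 CV
              nlinarith [norm_nonneg (y x)]
    have h0 : y (-1) = 0 := by
      have e1 : ((-1:ℝ):ℂ) = (-1:ℂ) := by push_cast; ring
      rw [hy]
      simp only [e1]
      rw [hub0, hU4, hU5, ← hα]
      simp
    have hfin := gron_zero hyd hbound h0
    intro x hx
    have hz := hfin x hx
    rw [hy] at hz
    constructor
    · have := congrArg Prod.fst hz
      simpa [sub_eq_zero] using this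
    · have := congrArg Prod.snd hz
      simpa [sub_eq_zero] using this
  -- |s| ≥ d everywhere
  have hsabs : ∀ t ∈ Set.Icc (0:ℝ) 1, d ≤ ‖s t‖ :=
    s_lower (W := fun z => V z - E) hγ hγ0 hγ1 hscont hsq hd0 hprog
  have hsne : ∀ t ∈ Set.Icc (0:ℝ) 1, s t ≠ 0 := by
    intro t ht hzero
    have := hsabs t ht
    rw [hzero] at this
    simp at this
    linarith
  -- derivative of s
  set s' : ℝ → ℂ := fun t => deriv V (γ t) * γ' t / (2 * s t) with hs'def
  have hs' : ∀ t ∈ Set.Icc (0:ℝ) 1, HasDerivWithinAt s (s' t) (Set.Icc (0:ℝ) 1) t :=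
    fun t ht => s_hasDeriv hV hγ hscont hsq t ht (hsne t ht)
  -- path data
  set A : ℝ → ℂ := fun t => U (γ t) with hAdef
  set B : ℝ → ℂ := fun t => (h:ℂ) * deriv U (γ t) with hBdef
  set A' : ℝ → ℂ := fun t => γ' t * deriv U (γ t) with hA'def
  set B' : ℝ → ℂ := fun t => (h:ℂ) * (γ' t * (q (γ t) * U (γ t))) with hB'def
  have hA : ∀ t ∈ Set.Icc (0:ℝ) 1, HasDerivWithinAt A (A' t) (Set.Icc (0:ℝ) 1) t := by
    intro t ht
    have h1 : HasDerivAt U (deriv U (γ t)) (γ t) := (hU1 _).hasDerivAt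
    have := HasDerivWithinAt.scomp (𝕜 := ℝ) (𝕜' := ℂ) t
      (h1.hasDerivWithinAt (s := Set.univ)) (hγ t ht) (Set.mapsTo_univ _ _)
    simpa [hAdef, hA'def, Function.comp_def, smul_eq_mul] using this
  have hB : ∀ t ∈ Set.Icc (0:ℝ) 1, HasDerivWithinAt B (B' t) (Set.Icc (0:ℝ) 1) t := by
    intro t ht
    have h1 : HasDerivAt (deriv U) (q (γ t) * U (γ t)) (γ t) := by
      have := (hU2 (γ t)).hasDerivAt
      rwa [hU3 (γ t)] at this
    have h2 := HasDerivWithinAt.scomp (𝕜 := ℝ) (𝕜' := ℂ) t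
      (h1.hasDerivWithinAt (s := Set.univ)) (hγ t ht) (Set.mapsTo_univ _ _)
    have := h2.const_mul (h:ℂ)
    simpa [hBdef, hB'def, Function.comp, smul_eq_mul, mul_assoc] using this
  -- identities
  have hqγ : ∀ t ∈ Set.Icc (0:ℝ) 1, q (γ t) = s t ^ 2 / (h:ℂ)^2 := by
    intro t ht
    simp only [hqdef]
    rw [← hsq t ht]
  have hB'eq : ∀ t ∈ Set.Icc (0:ℝ) 1, B' t = s t ^ 2 * γ' t * A t / (h:ℂ) := by
    intro t ht
    simp only [hB'def, hAdef]
    rw [hqγ t ht]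
    field_simp
  have hA'eq : ∀ t : ℝ, A' t = γ' t * (B t / (h:ℂ)) := by
    intro t
    simp only [hA'def, hBdef]
    field_simp
  -- w, v and the energy
  set w : ℝ → ℂ := fun t => B t + s t * A t with hwdef
  set v : ℝ → ℂ := fun t => B t - s t * A t with hvdef
  set w' : ℝ → ℂ := fun t => B' t + (s' t * A t + s t * A' t) with hw'def
  set v' : ℝ → ℂ := fun t => B' t - (s' t * A t + s t * A' t) with hv'def
  have hw : ∀ t ∈ Set.Icc (0:ℝ) 1, HasDerivWithinAt w (w' t) (Set.Icc (0:ℝ) 1) t :=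
    fun t ht => (hB t ht).add ((hs' t ht).mul (hA t ht))
  have hv : ∀ t ∈ Set.Icc (0:ℝ) 1, HasDerivWithinAt v (v' t) (Set.Icc (0:ℝ) 1) t :=
    fun t ht => (hB t ht).sub ((hs' t ht).mul (hA t ht))
  set Φ : ℝ → ℝ := fun t => Complex.normSq (w t) - Complex.normSq (v t) with hΦdef
  set Φ' : ℝ → ℝ := fun t =>
    2 * ((starRingEnd ℂ) (w t) * w' t).re - 2 * ((starRingEnd ℂ) (v t) * v' t).re with hΦ'def
  have hΦ : ∀ t ∈ Set.Icc (0:ℝ) 1, HasDerivWithinAt Φ (Φ' t) (Set.Icc (0:ℝ) 1) t :=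
    fun t ht => (normSq_hasDeriv (hw t ht)).sub (normSq_hasDeriv (hv t ht))
  -- structural identities for the derivatives of w and v
  have hw'eq : ∀ t ∈ Set.Icc (0:ℝ) 1, w' t = (s t * γ' t / (h:ℂ)) * w t + s' t * A t := by
    intro t ht
    simp only [hw'def, hwdef]
    rw [hB'eq t ht, hA'eq t]
    field_simp
    ring
  have hv'eq : ∀ t ∈ Set.Icc (0:ℝ) 1, v' t = -(s t * γ' t / (h:ℂ)) * v t - s' t * A t := by
    intro t ht
    simp only [hv'def, hvdef]
    rw [hB'eq t ht, hA'eq t]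
    field_simp
    ring
  -- the coefficient inequality
  have hcoef : M / (2*d^2) + M ≤ d / h := by
    rw [le_div_iff₀ hh0]
    have h1 : M * h ≤ d^7 / 2 := by
      have := mul_le_mul_of_nonneg_left hhc hM.le
      calc M * h ≤ M * (1/(2*M) * d^7) := this
        _ = d^7 / 2 := by field_simp
    have hd2 : d^2 ≤ 1 := by nlinarith
    have hd4 : d^4 ≤ 1 := by nlinarith
    have hd6 : d^6 ≤ 1 := by nlinarith
    have h5 : d^5 ≤ d := by nlinarith
    have h7 : d^7 ≤ d := by nlinarith
    have e1 : (M / (2*d^2) + M) * h = M * h / (2*d^2) + M * h := by ring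
    rw [e1]
    have h2 : M * h / (2*d^2) ≤ (d^7/2) / (2*d^2) :=
      (div_le_div_iff_of_pos_right (by positivity)).mpr h1
    have h3 : (d^7/2) / (2*d^2) = d^5/4 := by field_simp; ring
    rw [h3] at h2
    linarith
  -- the key lower bound for Φ'
  have hΦ'pos : ∀ t ∈ Set.Icc (0:ℝ) 1,
      2 * M * ‖γ' t‖ * (Complex.normSq (w t) + Complex.normSq (v t)) ≤ Φ' t := by
    intro t ht
    have e1 : (starRingEnd ℂ) (w t) * w t = (Complex.normSq (w t) : ℂ) := by
      rw [mul_comm, Complex.mul_conj]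
    have e2 : (starRingEnd ℂ) (v t) * v t = (Complex.normSq (v t) : ℂ) := by
      rw [mul_comm, Complex.mul_conj]
    have hX : (starRingEnd ℂ) (w t) * w' t - (starRingEnd ℂ) (v t) * v' t
        = (s t * γ' t / (h:ℂ)) * ((Complex.normSq (w t) : ℂ) + (Complex.normSq (v t) : ℂ))
          + ((starRingEnd ℂ) (w t) + (starRingEnd ℂ) (v t)) * (s' t * A t) := by
      rw [hw'eq t ht, hv'eq t ht]
      linear_combination (s t * γ' t / (h:ℂ)) * e1 + (s t * γ' t / (h:ℂ)) * e2
    set N : ℝ := Complex.normSq (w t) + Complex.normSq (v t) with hNdef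
    have hN0 : 0 ≤ N := add_nonneg (Complex.normSq_nonneg _) (Complex.normSq_nonneg _)
    set err : ℝ := (((starRingEnd ℂ) (w t) + (starRingEnd ℂ) (v t)) * (s' t * A t)).re
      with herrdef
    have hre : Φ' t = 2 * ((s t * γ' t).re / h * N) + 2 * err := by
      have h1 : Φ' t
          = 2 * (((starRingEnd ℂ) (w t) * w' t - (starRingEnd ℂ) (v t) * v' t).re) := by
        simp only [hΦ'def, Complex.sub_re]; ring
      rw [h1, hX, Complex.add_re]
      have hcast : ((Complex.normSq (w t) : ℂ) + (Complex.normSq (v t) : ℂ)) = ((N : ℝ) : ℂ) := by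
        rw [hNdef]; push_cast; ring
      rw [hcast, mul_ofReal_re, div_ofReal_re']
      rw [herrdef]
      ring
    -- bound on s'
    have hsabs' := hsabs t ht
    have habs_s' : ‖s' t‖ ≤ M * ‖γ' t‖ / (2*d) := by
      simp only [hs'def]
      rw [norm_div, norm_mul, norm_mul]
      have h2abs : ‖(2 : ℂ)‖ = 2 := by norm_num
      rw [h2abs]
      apply div_le_div₀ (by positivity)
      · exact mul_le_mul_of_nonneg_right (hVb t ht) (norm_nonneg _)
      · positivity
      · exact mul_le_mul_of_nonneg_left hsabs' (by norm_num)
    -- bound on A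
    have habs_A : ‖A t‖ ≤ (‖w t‖ + ‖v t‖) / (2*d) := by
      have hwv : w t - v t = 2 * s t * A t := by simp only [hwdef, hvdef]; ring
      have h1 : ‖w t - v t‖
          = 2 * ‖s t‖ * ‖A t‖ := by
        rw [hwv, norm_mul, norm_mul]
        norm_num
      have h2 : ‖w t - v t‖ ≤ ‖w t‖ + ‖v t‖ := by
        have := norm_sub_le (w t) (v t)
        simpa using this
      rw [le_div_iff₀ (by positivity : (0:ℝ) < 2*d)]
      nlinarith [norm_nonneg (A t), norm_nonneg (s t)]
    -- bound on err
    have herr : |err| ≤ (‖w t‖ + ‖v t‖)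
        * (M * ‖γ' t‖ / (2*d))
        * ((‖w t‖ + ‖v t‖) / (2*d)) := by
      have h1 : |err| ≤
          ‖((starRingEnd ℂ) (w t) + (starRingEnd ℂ) (v t)) * (s' t * A t)‖ := by
        rw [herrdef]
        exact Complex.abs_re_le_norm _
      rw [norm_mul, norm_mul] at h1
      have h2 : ‖(starRingEnd ℂ) (w t) + (starRingEnd ℂ) (v t)‖
          ≤ ‖w t‖ + ‖v t‖ := by
        calc ‖(starRingEnd ℂ) (w t) + (starRingEnd ℂ) (v t)‖
            ≤ ‖(starRingEnd ℂ) (w t)‖ + ‖(starRingEnd ℂ) (v t)‖ :=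
              norm_add_le _ _
          _ = ‖w t‖ + ‖v t‖ := by rw [Complex.norm_conj, Complex.norm_conj]
      calc |err| ≤ ‖(starRingEnd ℂ) (w t) + (starRingEnd ℂ) (v t)‖
            * (‖s' t‖ * ‖A t‖) := h1
        _ ≤ (‖w t‖ + ‖v t‖)
            * ((M * ‖γ' t‖ / (2*d)) * ((‖w t‖ + ‖v t‖) / (2*d))) := by
            apply mul_le_mul h2 _ (by positivity) (by positivity)
            exact mul_le_mul habs_s' habs_A (norm_nonneg _) (by positivity)
        _ = (‖w t‖ + ‖v t‖) * (M * ‖γ' t‖ / (2*d))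
            * ((‖w t‖ + ‖v t‖) / (2*d)) := by ring
    -- assemble
    rw [hre]
    set G : ℝ := ‖γ' t‖ with hGdef
    have hG0 : 0 ≤ G := norm_nonneg _
    have habsw : ‖w t‖ ^ 2 = Complex.normSq (w t) := Complex.sq_norm _
    have habsv : ‖v t‖ ^ 2 = Complex.normSq (v t) := Complex.sq_norm _
    have k1 : d * G / h * N ≤ (s t * γ' t).re / h * N := by
      apply mul_le_mul_of_nonneg_right _ hN0
      exact (div_le_div_iff_of_pos_right hh0).mpr (hprog t ht)
    have k2 : -(M * G / (2*d^2) * N) ≤ err := by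
      have hsq2 : (‖w t‖ + ‖v t‖)^2 ≤ 2*N := by
        rw [hNdef, ← habsw, ← habsv]
        nlinarith [sq_nonneg (‖w t‖ - ‖v t‖)]
      have hR : (‖w t‖ + ‖v t‖) * (M * G / (2*d))
          * ((‖w t‖ + ‖v t‖) / (2*d)) ≤ M * G / (2*d^2) * N := by
        have heq2 : (‖w t‖ + ‖v t‖) * (M * G / (2*d))
            * ((‖w t‖ + ‖v t‖) / (2*d))
            = (M * G / (4*d^2)) * (‖w t‖ + ‖v t‖)^2 := by
          field_simp
          ring
        rw [heq2]
        calc (M * G / (4*d^2)) * (‖w t‖ + ‖v t‖)^2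
            ≤ (M * G / (4*d^2)) * (2*N) :=
              mul_le_mul_of_nonneg_left hsq2 (by positivity)
          _ = M * G / (2*d^2) * N := by ring
      have := neg_abs_le err
      linarith [herr, hR]
    have k3 : M * G / (2*d^2) * N + M * G * N ≤ d * G / h * N := by
      have h0 : (0:ℝ) ≤ G * N := mul_nonneg hG0 hN0
      calc M * G / (2*d^2) * N + M * G * N = (M/(2*d^2) + M) * (G*N) := by ring
        _ ≤ (d/h) * (G*N) := mul_le_mul_of_nonneg_right hcoef h0
        _ = d * G / h * N := by ring
    linarith [k1, k2, k3]
  -- Φ is monotone and vanishes at both ends, so vanishes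
  have hzeroΦ : ∀ t ∈ Set.Icc (0:ℝ) 1, Φ t = 0 := by
    have hcont : ContinuousOn Φ (Set.Icc (0:ℝ) 1) := fun t ht => (hΦ t ht).continuousWithinAt
    have hdiff : DifferentiableOn ℝ Φ (interior (Set.Icc (0:ℝ) 1)) := by
      rw [interior_Icc]
      intro t ht
      exact ((hΦ t (Set.Ioo_subset_Icc_self ht)).hasDerivAt
        (Icc_mem_nhds ht.1 ht.2)).differentiableAt.differentiableWithinAt
    have hnonneg : ∀ t ∈ interior (Set.Icc (0:ℝ) 1), 0 ≤ deriv Φ t := by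
      rw [interior_Icc]
      intro t ht
      have hd := (hΦ t (Set.Ioo_subset_Icc_self ht)).hasDerivAt (Icc_mem_nhds ht.1 ht.2)
      rw [hd.deriv]
      have h2 := hΦ'pos t (Set.Ioo_subset_Icc_self ht)
      have h0 : (0:ℝ) ≤ 2*M*‖γ' t‖*(Complex.normSq (w t) + Complex.normSq (v t)) := by
        have := Complex.normSq_nonneg (w t)
        have := Complex.normSq_nonneg (v t)
        have := norm_nonneg (γ' t)
        positivity
      linarith
    have hmono := monotoneOn_of_deriv_nonneg (convex_Icc 0 1) hcont hdiff hnonneg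
    have hA0 : A 0 = 0 := by
      simp only [hAdef]
      rw [hγ0, hU4]
    have hΦ0 : Φ 0 = 0 := by
      simp only [hΦdef, hwdef, hvdef]
      rw [hA0]
      simp
    have hA1 : A 1 = 0 := by
      simp only [hAdef]
      rw [hγ1]
      have h1 := (main3 1 ⟨by norm_num, le_rfl⟩).1
      rw [hub1] at h1
      rw [show ((1:ℝ):ℂ) = (1:ℂ) by norm_num] at h1
      exact h1.symm
    have hΦ1 : Φ 1 = 0 := by
      simp only [hΦdef, hwdef, hvdef]
      rw [hA1]
      simp
    intro t ht
    have hle1 : Φ t ≤ Φ 1 := hmono ht ⟨zero_le_one, le_rfl⟩ ht.2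
    have hle0 : Φ 0 ≤ Φ t := hmono ⟨le_rfl, zero_le_one⟩ ht ht.1
    rw [hΦ0] at hle0
    rw [hΦ1] at hle1
    linarith
  -- a point where γ' doesn't vanish
  obtain ⟨t₀, ht₀, hγ't₀⟩ : ∃ t₀ ∈ Set.Icc (0:ℝ) 1, γ' t₀ ≠ 0 := by
    by_contra hcon
    push_neg at hcon
    have := gamma_const zero_le_one le_rfl le_rfl hγ
      (fun t ht => hcon t ⟨ht.1, ht.2.le⟩) 1 ⟨zero_le_one, le_rfl⟩
    rw [hγ1, hγ0] at this
    norm_num at this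
  -- at t₀ both A and B vanish
  have hAB0 : A t₀ = 0 ∧ B t₀ = 0 := by
    have hconstΦ : HasDerivWithinAt Φ 0 (Set.Icc (0:ℝ) 1) t₀ :=
      (hasDerivWithinAt_const t₀ _ (0:ℝ)).congr (fun τ hτ => hzeroΦ τ hτ) (hzeroΦ t₀ ht₀)
    have hud := uniqueDiffOn_Icc (zero_lt_one) t₀ ht₀
    have h1 : Φ' t₀ = 0 := by
      have e1 := (hΦ t₀ ht₀).derivWithin hud
      have e2 := hconstΦ.derivWithin hud
      rw [← e1, e2]
    have h2 := hΦ'pos t₀ ht₀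
    rw [h1] at h2
    have hGpos : 0 < ‖γ' t₀‖ := norm_pos_iff.mpr hγ't₀
    have hface : (0:ℝ) < 2 * M * ‖γ' t₀‖ := by positivity
    have hsum : Complex.normSq (w t₀) + Complex.normSq (v t₀) = 0 := by
      by_contra hne'
      have hSpos : 0 < Complex.normSq (w t₀) + Complex.normSq (v t₀) :=
        lt_of_le_of_ne (add_nonneg (Complex.normSq_nonneg _) (Complex.normSq_nonneg _))
          (Ne.symm hne')
      nlinarith [mul_pos hface hSpos]
    have hw0 : w t₀ = 0 := by
      apply Complex.normSq_eq_zero.mp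
      linarith [Complex.normSq_nonneg (v t₀), Complex.normSq_nonneg (w t₀)]
    have hv0 : v t₀ = 0 := by
      apply Complex.normSq_eq_zero.mp
      linarith [Complex.normSq_nonneg (v t₀), Complex.normSq_nonneg (w t₀)]
    have hwv : w t₀ - v t₀ = 2 * s t₀ * A t₀ := by simp only [hwdef, hvdef]; ring
    have hwv2 : w t₀ + v t₀ = 2 * B t₀ := by simp only [hwdef, hvdef]; ring
    rw [hw0, hv0] at hwv hwv2
    constructor
    · have h3 : 2 * s t₀ * A t₀ = 0 := by rw [← hwv]; ring
      rcases mul_eq_zero.mp h3 with h4 | h4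
      · exact absurd (mul_eq_zero.mp h4) (by
          push_neg
          exact ⟨two_ne_zero, hsne t₀ ht₀⟩)
      · exact h4
    · have h3 : 2 * B t₀ = 0 := by rw [← hwv2]; ring
      rcases mul_eq_zero.mp h3 with h4 | h4
      · norm_num at h4
      · exact h4
  -- transport the zero along the whole path by Gronwall
  have hB0 : B 0 = 0 := by
    obtain ⟨Cγ, hCγ⟩ := isCompact_Icc.exists_bound_of_continuousOn hγ'c
    obtain ⟨Cs, hCs⟩ := isCompact_Icc.exists_bound_of_continuousOn hscont
    have hCγ0 : (0:ℝ) ≤ Cγ := le_trans (norm_nonneg _) (hCγ 0 ⟨le_rfl, zero_le_one⟩)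
    have hCs0 : (0:ℝ) ≤ Cs := le_trans (norm_nonneg _) (hCs 0 ⟨le_rfl, zero_le_one⟩)
    set P : ℝ → ℂ × ℂ := fun t => (A t, B t) with hPdef
    set P' : ℝ → ℂ × ℂ := fun t => (A' t, B' t) with hP'def
    have hPd : ∀ t ∈ Set.Icc (0:ℝ) 1, HasDerivWithinAt P (P' t) (Set.Icc (0:ℝ) 1) t :=
      fun t ht => (hA t ht).prodMk (hB t ht)
    have hnormh : ‖((h:ℝ):ℂ)‖ = h := by
      rw [Complex.norm_real, Real.norm_eq_abs, abs_of_pos hh0]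
    have hKP : ∀ t ∈ Set.Icc (0:ℝ) 1, ‖P' t‖ ≤ (Cγ * (1 + Cs^2) / h) * ‖P t‖ := by
      intro t ht
      have hBP : ‖B t‖ ≤ ‖P t‖ := norm_snd_le (P t)
      have hAP : ‖A t‖ ≤ ‖P t‖ := norm_fst_le (P t)
      have hP0 : (0:ℝ) ≤ ‖P t‖ := norm_nonneg _
      rw [Prod.norm_def]
      apply max_le
      · show ‖A' t‖ ≤ _
        have e : ‖A' t‖ = ‖γ' t‖ * ‖B t‖ / h := by
          rw [hA'eq t, norm_mul, norm_div, hnormh]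
          ring
        rw [e, show (Cγ * (1 + Cs^2) / h) * ‖P t‖ = Cγ * (1 + Cs^2) * ‖P t‖ / h by ring]
        apply (div_le_div_iff_of_pos_right hh0).mpr
        calc ‖γ' t‖ * ‖B t‖ ≤ Cγ * ‖P t‖ :=
              mul_le_mul (hCγ t ht) hBP (norm_nonneg _) hCγ0
          _ ≤ Cγ * (1 + Cs^2) * ‖P t‖ := by
              nlinarith [mul_nonneg (mul_nonneg hCγ0 (sq_nonneg Cs)) hP0]
      · show ‖B' t‖ ≤ _
        have e : ‖B' t‖ = ‖s t‖^2 * ‖γ' t‖ * ‖A t‖ / h := by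
          rw [hB'eq t ht, norm_div, norm_mul, norm_mul, norm_pow, hnormh]
        rw [e, show (Cγ * (1 + Cs^2) / h) * ‖P t‖ = Cγ * (1 + Cs^2) * ‖P t‖ / h by ring]
        apply (div_le_div_iff_of_pos_right hh0).mpr
        have hst : ‖s t‖ ≤ Cs := hCs t ht
        have h1 : ‖s t‖^2 ≤ Cs^2 := by nlinarith [norm_nonneg (s t)]
        calc ‖s t‖^2 * ‖γ' t‖ * ‖A t‖ = ‖s t‖^2 * (‖γ' t‖ * ‖A t‖) := by ring
          _ ≤ Cs^2 * (Cγ * ‖P t‖) := by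
              have h2 : ‖γ' t‖ * ‖A t‖ ≤ Cγ * ‖P t‖ :=
                mul_le_mul (hCγ t ht) hAP (norm_nonneg _) hCγ0
              have h3 : (0:ℝ) ≤ ‖γ' t‖ * ‖A t‖ := by positivity
              exact mul_le_mul h1 h2 h3 (sq_nonneg Cs)
          _ ≤ Cγ * (1 + Cs^2) * ‖P t‖ := by
              nlinarith [mul_nonneg hCγ0 hP0]
    have hPt₀ : P t₀ = 0 := by
      simp only [hPdef]
      rw [hAB0.1, hAB0.2]
      rfl
    have hfin := gron_zero_two ht₀ hPd hKP hPt₀ 0 ⟨le_rfl, zero_le_one⟩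
    have := congrArg Prod.snd hfin
    simpa using this
  -- hence α = 0
  have hα0 : α = 0 := by
    have : (h:ℂ) * deriv U (γ 0) = 0 := hB0
    rw [hγ0, hU5] at this
    rcases mul_eq_zero.mp this with h1 | h1
    · exact absurd h1 hhne
    · exact h1
  -- final : u ≡ 0 by Gronwall on [-1,1]
  set Y : ℝ → ℂ × ℂ := fun x => (u x, u' x) with hYdef
  set Y' : ℝ → ℂ × ℂ := fun x => (u' x, u'' x) with hY'def
  have hYd : ∀ x ∈ Set.Icc (-1:ℝ) 1, HasDerivWithinAt Y (Y' x) (Set.Icc (-1:ℝ) 1) x :=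
    fun x hx => (hu1 x hx).prodMk (hu2 x hx)
  have hYb : ∀ x ∈ Set.Icc (-1:ℝ) 1, ‖Y' x‖ ≤ max 1 CV * ‖Y x‖ := by
    intro x hx
    have hCVx : ‖q (x:ℂ)‖ ≤ CV := hCV _ ⟨x, hx, rfl⟩
    have hCV0 : (0:ℝ) ≤ CV := le_trans (norm_nonneg _) hCVx
    have hY0 : (0:ℝ) ≤ ‖Y x‖ := norm_nonneg _
    rw [Prod.norm_def]
    apply max_le
    · show ‖u' x‖ ≤ _
      calc ‖u' x‖ = ‖(Y x).2‖ := rfl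
        _ ≤ ‖Y x‖ := norm_snd_le (Y x)
        _ ≤ max 1 CV * ‖Y x‖ := by nlinarith [le_max_left 1 CV]
    · show ‖u'' x‖ ≤ _
      rw [hode' x hx, norm_mul]
      calc ‖q (x:ℂ)‖ * ‖u x‖ ≤ CV * ‖Y x‖ := by
            have := norm_fst_le (Y x)
            nlinarith [norm_nonneg (u x)]
        _ ≤ max 1 CV * ‖Y x‖ := by nlinarith [le_max_right 1 CV]
  have hY0 : Y (-1) = 0 := by
    simp only [hYdef]
    rw [hub0, ← hα, hα0]
    rfl
  have hfin := gron_zero hYd hYb hY0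
  intro x hx
  have := congrArg Prod.fst (hfin x hx)
  simpa using this
end
end

section
/- Let h > 0, E ∈ ℂ, β ∈ (−1,1), and let W_l : [−1,β] → ℂ, W_r : [β,1] → ℂ be continuous. Let u₋, u₊ : [−1,β] → ℂ be twice continuously differentiable solutions of −h²u″ + W_l u = Eu on [−1,β] whose Wronskian u₋u₊′ − u₋′u₊ is nonvanishing, and let v₋, v₊ : [β,1] → ℂ be twice continuously differentiable solutions of −h²v″ + W_r v = Ev on [β,1] whose Wronskian is nonvanishing. Then there exists a nonzero continuously differentiable f : [−1,1] → ℂ whose restrictions to [−1,β] and to [β,1] are twice continuously differentiable, satisfying −h²f″ + W_l f = Ef on [−1,β] and −h²f″ + W_r f = Ef on [β,1] (with one-sided second derivatives at β), and f(−1) = f(1) = 0, if and only if the determinant of the 4×4 matrix with rows (u₋(−1), u₊(−1), 0, 0), (u₋(β), u₊(β), −v₋(β), −v₊(β)), (u₋′(β), u₊′(β), −v₋′(β), −v₊′(β)), (0, 0, v₋(1), v₊(1)) vanishes. -/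
open Set

lemma myConst {g : ℝ → ℂ} {s : Set ℝ} (hs : Convex ℝ s)
    (hg : ∀ x ∈ s, HasDerivWithinAt g 0 s x) {x y : ℝ} (hx : x ∈ s) (hy : y ∈ s) :
    g x = g y := by
  have h := hs.norm_image_sub_le_of_norm_hasDerivWithin_le
    (f := g) (f' := fun _ => (0:ℂ)) (C := 0) hg (fun z hz => by simp) hy hx
  have h0 : ‖g x - g y‖ ≤ 0 := by simpa using h
  have h1 : g x - g y = 0 := norm_le_zero_iff.1 h0
  linear_combination h1

/-- Any solution of `w'' = q·w` on `[a,b]` is a constant-coefficient combination of two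
solutions `u`, `p` whose Wronskian at `b` is nonzero. -/
lemma myRepr {a b : ℝ} (hab : a ≤ b) (q u u' u'' p p' p'' w w' w'' : ℝ → ℂ)
    (hu : ∀ x ∈ Icc a b, HasDerivWithinAt u (u' x) (Icc a b) x)
    (hu' : ∀ x ∈ Icc a b, HasDerivWithinAt u' (u'' x) (Icc a b) x)
    (hequ : ∀ x ∈ Icc a b, u'' x = q x * u x)
    (hp : ∀ x ∈ Icc a b, HasDerivWithinAt p (p' x) (Icc a b) x)
    (hp' : ∀ x ∈ Icc a b, HasDerivWithinAt p' (p'' x) (Icc a b) x)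
    (heqp : ∀ x ∈ Icc a b, p'' x = q x * p x)
    (hw : ∀ x ∈ Icc a b, HasDerivWithinAt w (w' x) (Icc a b) x)
    (hw' : ∀ x ∈ Icc a b, HasDerivWithinAt w' (w'' x) (Icc a b) x)
    (heqw : ∀ x ∈ Icc a b, w'' x = q x * w x)
    (hW : u b * p' b - u' b * p b ≠ 0) :
    ∃ c d : ℂ, ∀ x ∈ Icc a b, w x = c * u x + d * p x ∧ w' x = c * u' x + d * p' x := by
  have hbs : b ∈ Icc a b := right_mem_Icc.2 hab
  have hN1 : ∀ x ∈ Icc a b,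
      HasDerivWithinAt (fun y => w y * p' y - w' y * p y) 0 (Icc a b) x := by
    intro x hx
    have h1 := ((hw x hx).mul (hp' x hx)).sub ((hw' x hx).mul (hp x hx))
    rw [heqp x hx, heqw x hx] at h1
    exact h1.congr_deriv (by ring)
  have hN2 : ∀ x ∈ Icc a b,
      HasDerivWithinAt (fun y => u y * w' y - u' y * w y) 0 (Icc a b) x := by
    intro x hx
    have h1 := ((hu x hx).mul (hw' x hx)).sub ((hu' x hx).mul (hw x hx))
    rw [heqw x hx, hequ x hx] at h1
    exact h1.congr_deriv (by ring)
  have hN3 : ∀ x ∈ Icc a b,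
      HasDerivWithinAt (fun y => u y * p' y - u' y * p y) 0 (Icc a b) x := by
    intro x hx
    have h1 := ((hu x hx).mul (hp' x hx)).sub ((hu' x hx).mul (hp x hx))
    rw [heqp x hx, hequ x hx] at h1
    exact h1.congr_deriv (by ring)
  refine ⟨(w b * p' b - w' b * p b) / (u b * p' b - u' b * p b),
          (u b * w' b - u' b * w b) / (u b * p' b - u' b * p b), fun x hx => ?_⟩
  have hA : w x * p' x - w' x * p x = w b * p' b - w' b * p b :=
    myConst (convex_Icc a b) hN1 hx hbs
  have hB : u x * w' x - u' x * w x = u b * w' b - u' b * w b :=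
    myConst (convex_Icc a b) hN2 hx hbs
  have hC : u x * p' x - u' x * p x = u b * p' b - u' b * p b :=
    myConst (convex_Icc a b) hN3 hx hbs
  constructor
  · rw [div_mul_eq_mul_div, div_mul_eq_mul_div, ← add_div, eq_div_iff hW]
    linear_combination u x * hA + p x * hB + w x * hC.symm
  · rw [div_mul_eq_mul_div, div_mul_eq_mul_div, ← add_div, eq_div_iff hW]
    linear_combination u' x * hA + p' x * hB + w' x * hC.symm

lemma myEq2 {h : ℝ} (hh2 : ((h:ℂ))^2 ≠ 0) {W g g'' : ℝ → ℂ} {E : ℂ} {s : Set ℝ}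
    (hg : ∀ x ∈ s, -(h:ℂ)^2 * g'' x + W x * g x = E * g x) :
    ∀ x ∈ s, g'' x = (fun y => (W y - E)/(h:ℂ)^2) x * g x := by
  intro x hx
  have h1 := hg x hx
  rw [div_mul_eq_mul_div, eq_div_iff hh2]
  linear_combination -h1

/-- eigenvalue criterion `det 𝓘(β,E) = 0` of the paper: given two
bases of solutions (with nonvanishing Wronskians) of `-h²w'' + W_{l,r}·w = E·w` on
`[-1,β]` and `[β,1]`, there exists a nonzero `C¹` function on `[-1,1]`, piecewise
`C²`, solving the equation on each side with Dirichlet boundary conditions, if and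
only if the determinant of the 4×4 connection matrix vanishes. -/
theorem stmt5 (h : ℝ) (hh : 0 < h) (E : ℂ) (β : ℝ) (hβ : β ∈ Set.Ioo (-1:ℝ) 1)
    (Wl Wr : ℝ → ℂ)
    (hWl : ContinuousOn Wl (Set.Icc (-1:ℝ) β))
    (hWr : ContinuousOn Wr (Set.Icc β (1:ℝ)))
    (um um' um'' up up' up'' vm vm' vm'' vp vp' vp'' : ℝ → ℂ)
    -- `u₋ = um` and `u₊ = up` are solutions on `[-1,β]`
    (hum : ∀ x ∈ Set.Icc (-1:ℝ) β, HasDerivWithinAt um (um' x) (Set.Icc (-1:ℝ) β) x)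
    (hum' : ∀ x ∈ Set.Icc (-1:ℝ) β, HasDerivWithinAt um' (um'' x) (Set.Icc (-1:ℝ) β) x)
    (hum'' : ContinuousOn um'' (Set.Icc (-1:ℝ) β))
    (hequm : ∀ x ∈ Set.Icc (-1:ℝ) β, -(h:ℂ)^2 * um'' x + Wl x * um x = E * um x)
    (hup : ∀ x ∈ Set.Icc (-1:ℝ) β, HasDerivWithinAt up (up' x) (Set.Icc (-1:ℝ) β) x)
    (hup' : ∀ x ∈ Set.Icc (-1:ℝ) β, HasDerivWithinAt up' (up'' x) (Set.Icc (-1:ℝ) β) x)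
    (hup'' : ContinuousOn up'' (Set.Icc (-1:ℝ) β))
    (hequp : ∀ x ∈ Set.Icc (-1:ℝ) β, -(h:ℂ)^2 * up'' x + Wl x * up x = E * up x)
    (hWronl : ∀ x ∈ Set.Icc (-1:ℝ) β, um x * up' x - um' x * up x ≠ 0)
    -- `v₋ = vm` and `v₊ = vp` are solutions on `[β,1]`
    (hvm : ∀ x ∈ Set.Icc β (1:ℝ), HasDerivWithinAt vm (vm' x) (Set.Icc β (1:ℝ)) x)
    (hvm' : ∀ x ∈ Set.Icc β (1:ℝ), HasDerivWithinAt vm' (vm'' x) (Set.Icc β (1:ℝ)) x)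
    (hvm'' : ContinuousOn vm'' (Set.Icc β (1:ℝ)))
    (heqvm : ∀ x ∈ Set.Icc β (1:ℝ), -(h:ℂ)^2 * vm'' x + Wr x * vm x = E * vm x)
    (hvp : ∀ x ∈ Set.Icc β (1:ℝ), HasDerivWithinAt vp (vp' x) (Set.Icc β (1:ℝ)) x)
    (hvp' : ∀ x ∈ Set.Icc β (1:ℝ), HasDerivWithinAt vp' (vp'' x) (Set.Icc β (1:ℝ)) x)
    (hvp'' : ContinuousOn vp'' (Set.Icc β (1:ℝ)))
    (heqvp : ∀ x ∈ Set.Icc β (1:ℝ), -(h:ℂ)^2 * vp'' x + Wr x * vp x = E * vp x)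
    (hWronr : ∀ x ∈ Set.Icc β (1:ℝ), vm x * vp' x - vm' x * vp x ≠ 0) :
    (∃ f f' fl'' fr'' : ℝ → ℂ,
      (∀ x ∈ Set.Icc (-1:ℝ) 1, HasDerivWithinAt f (f' x) (Set.Icc (-1:ℝ) 1) x) ∧
      ContinuousOn f' (Set.Icc (-1:ℝ) 1) ∧
      (∀ x ∈ Set.Icc (-1:ℝ) β, HasDerivWithinAt f' (fl'' x) (Set.Icc (-1:ℝ) β) x) ∧
      ContinuousOn fl'' (Set.Icc (-1:ℝ) β) ∧
      (∀ x ∈ Set.Icc β (1:ℝ), HasDerivWithinAt f' (fr'' x) (Set.Icc β (1:ℝ)) x) ∧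
      ContinuousOn fr'' (Set.Icc β (1:ℝ)) ∧
      (∀ x ∈ Set.Icc (-1:ℝ) β, -(h:ℂ)^2 * fl'' x + Wl x * f x = E * f x) ∧
      (∀ x ∈ Set.Icc β (1:ℝ), -(h:ℂ)^2 * fr'' x + Wr x * f x = E * f x) ∧
      f (-1) = 0 ∧ f 1 = 0 ∧
      (∃ x ∈ Set.Icc (-1:ℝ) 1, f x ≠ 0))
    ↔
    (!![um (-1), up (-1), 0,       0;
        um β,    up β,    -vm β,   -vp β;
        um' β,   up' β,   -vm' β,  -vp' β;
        0,       0,       vm 1,    vp 1] : Matrix (Fin 4) (Fin 4) ℂ).det = 0 := by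
  obtain ⟨hb1, hb2⟩ := hβ
  have hb1' : (-1:ℝ) ≤ β := hb1.le
  have hb2' : β ≤ (1:ℝ) := hb2.le
  have hβL : β ∈ Set.Icc (-1:ℝ) β := Set.right_mem_Icc.2 hb1'
  have hβR : β ∈ Set.Icc β (1:ℝ) := Set.left_mem_Icc.2 hb2'
  have hm1L : (-1:ℝ) ∈ Set.Icc (-1:ℝ) β := Set.left_mem_Icc.2 hb1'
  have h1R : (1:ℝ) ∈ Set.Icc β (1:ℝ) := Set.right_mem_Icc.2 hb2'
  have hsubL : Set.Icc (-1:ℝ) β ⊆ Set.Icc (-1:ℝ) 1 := Set.Icc_subset_Icc_right hb2'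
  have hsubR : Set.Icc β (1:ℝ) ⊆ Set.Icc (-1:ℝ) 1 := Set.Icc_subset_Icc_left hb1'
  have hunion : Set.Icc (-1:ℝ) 1 = Set.Icc (-1:ℝ) β ∪ Set.Icc β 1 :=
    (Set.Icc_union_Icc_eq_Icc hb1' hb2').symm
  have hh2 : ((h:ℂ))^2 ≠ 0 := pow_ne_zero _ (by exact_mod_cast hh.ne')
  constructor
  · rintro ⟨f, f', fl'', fr'', hf, hf'c, hfl, hflc, hfr, hfrc, heql, heqr, hfm1, hf1,
      x₀, hx₀, hfx₀⟩
    have hfL : ∀ x ∈ Set.Icc (-1:ℝ) β, HasDerivWithinAt f (f' x) (Set.Icc (-1:ℝ) β) x :=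
      fun x hx => (hf x (hsubL hx)).mono hsubL
    have hfR : ∀ x ∈ Set.Icc β (1:ℝ), HasDerivWithinAt f (f' x) (Set.Icc β (1:ℝ)) x :=
      fun x hx => (hf x (hsubR hx)).mono hsubR
    obtain ⟨c1, c2, hc12⟩ := myRepr hb1' (fun y => (Wl y - E)/(h:ℂ)^2)
      um um' um'' up up' up'' f f' fl''
      hum hum' (myEq2 hh2 hequm) hup hup' (myEq2 hh2 hequp) hfL hfl (myEq2 hh2 heql)
      (hWronl β hβL)
    obtain ⟨c3, c4, hc34⟩ := myRepr hb2' (fun y => (Wr y - E)/(h:ℂ)^2)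
      vm vm' vm'' vp vp' vp'' f f' fr''
      hvm hvm' (myEq2 hh2 heqvm) hvp hvp' (myEq2 hh2 heqvp) hfR hfr (myEq2 hh2 heqr)
      (hWronr 1 h1R)
    rw [← Matrix.exists_mulVec_eq_zero_iff]
    refine ⟨![c1, c2, c3, c4], ?_, ?_⟩
    · intro h0
      have e0 : c1 = 0 := by simpa using congrFun h0 0
      have e1 : c2 = 0 := by simpa using congrFun h0 1
      have e2 : c3 = 0 := by simpa using congrFun h0 2
      have e3 : c4 = 0 := by simpa using congrFun h0 3
      by_cases hx0 : x₀ ≤ β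
      · exact hfx₀ (by rw [(hc12 x₀ ⟨hx₀.1, hx0⟩).1, e0, e1]; ring)
      · exact hfx₀ (by rw [(hc34 x₀ ⟨le_of_not_ge hx0, hx₀.2⟩).1, e2, e3]; ring)
    · have hL := hc12 β hβL
      have hR := hc34 β hβR
      have hmm := hc12 (-1) hm1L
      have hpp := hc34 1 h1R
      funext i
      fin_cases i <;>
        simp [Matrix.mulVec, dotProduct, Fin.sum_univ_four]
      · linear_combination hfm1 - hmm.1
      · linear_combination hR.1 - hL.1
      · linear_combination hR.2 - hL.2
      · linear_combination hf1 - hpp.1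
  · intro hdet
    obtain ⟨v, hv0, hveq⟩ := Matrix.exists_mulVec_eq_zero_iff.2 hdet
    have r0 := congrFun hveq 0
    have r1 := congrFun hveq 1
    have r2 := congrFun hveq 2
    have r3 := congrFun hveq 3
    simp only [Matrix.mulVec, dotProduct, Fin.sum_univ_four, Matrix.cons_val',
      Matrix.cons_val_zero, Matrix.cons_val_one, Matrix.head_cons, Matrix.empty_val',
      Matrix.cons_val_fin_one, Matrix.head_fin_const, Matrix.cons_val_two,
      Matrix.cons_val_three, Matrix.tail_cons, Matrix.of_apply, Pi.zero_apply] at r0 r1 r2 r3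
    set a := v 0 with ha_def
    set b := v 1 with hb_def
    set c := v 2 with hc_def
    set d := v 3 with hd_def
    set F : ℝ → ℂ := fun x => if x ≤ β then a * um x + b * up x else c * vm x + d * vp x
      with hF
    set F' : ℝ → ℂ := fun x => if x ≤ β then a * um' x + b * up' x else c * vm' x + d * vp' x
      with hF'
    have hmatch : a * um β + b * up β = c * vm β + d * vp β := by linear_combination r1
    have hmatch' : a * um' β + b * up' β = c * vm' β + d * vp' β := by linear_combination r2
    have hFeqL : ∀ x ∈ Set.Icc (-1:ℝ) β, F x = a * um x + b * up x :=
      fun x hx => if_pos hx.2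
    have hF'eqL : ∀ x ∈ Set.Icc (-1:ℝ) β, F' x = a * um' x + b * up' x :=
      fun x hx => if_pos hx.2
    have hFeqR : ∀ x ∈ Set.Icc β (1:ℝ), F x = c * vm x + d * vp x := by
      intro x hx
      by_cases hxb : x ≤ β
      · have hxβ : x = β := le_antisymm hxb hx.1
        subst hxβ
        rw [hF]; simp only [le_refl, if_pos]; exact hmatch
      · exact if_neg hxb
    have hF'eqR : ∀ x ∈ Set.Icc β (1:ℝ), F' x = c * vm' x + d * vp' x := by
      intro x hx
      by_cases hxb : x ≤ β
      · have hxβ : x = β := le_antisymm hxb hx.1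
        subst hxβ
        rw [hF']; simp only [le_refl, if_pos]; exact hmatch'
      · exact if_neg hxb
    have hFdL : ∀ x ∈ Set.Icc (-1:ℝ) β, HasDerivWithinAt F (F' x) (Set.Icc (-1:ℝ) β) x := by
      intro x hx
      have h1 : HasDerivWithinAt (fun y => a * um y + b * up y) (a * um' x + b * up' x)
          (Set.Icc (-1:ℝ) β) x := ((hum x hx).const_mul a).add ((hup x hx).const_mul b)
      rw [hF'eqL x hx]
      exact h1.congr hFeqL (hFeqL x hx)
    have hFdR : ∀ x ∈ Set.Icc β (1:ℝ), HasDerivWithinAt F (F' x) (Set.Icc β (1:ℝ)) x := by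
      intro x hx
      have h1 : HasDerivWithinAt (fun y => c * vm y + d * vp y) (c * vm' x + d * vp' x)
          (Set.Icc β (1:ℝ)) x := ((hvm x hx).const_mul c).add ((hvp x hx).const_mul d)
      rw [hF'eqR x hx]
      exact h1.congr hFeqR (hFeqR x hx)
    have hF'dL : ∀ x ∈ Set.Icc (-1:ℝ) β,
        HasDerivWithinAt F' (a * um'' x + b * up'' x) (Set.Icc (-1:ℝ) β) x := by
      intro x hx
      have h1 : HasDerivWithinAt (fun y => a * um' y + b * up' y) (a * um'' x + b * up'' x)
          (Set.Icc (-1:ℝ) β) x := ((hum' x hx).const_mul a).add ((hup' x hx).const_mul b)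
      exact h1.congr hF'eqL (hF'eqL x hx)
    have hF'dR : ∀ x ∈ Set.Icc β (1:ℝ),
        HasDerivWithinAt F' (c * vm'' x + d * vp'' x) (Set.Icc β (1:ℝ)) x := by
      intro x hx
      have h1 : HasDerivWithinAt (fun y => c * vm' y + d * vp' y) (c * vm'' x + d * vp'' x)
          (Set.Icc β (1:ℝ)) x := ((hvm' x hx).const_mul c).add ((hvp' x hx).const_mul d)
      exact h1.congr hF'eqR (hF'eqR x hx)
    refine ⟨F, F', fun x => a * um'' x + b * up'' x, fun x => c * vm'' x + d * vp'' x,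
      ?_, ?_, hF'dL, ?_, hF'dR, ?_, ?_, ?_, ?_, ?_, ?_⟩
    · -- C¹ on the whole interval
      intro x hx
      rw [hunion]
      by_cases hxb : x ≤ β
      · have h1 := hFdL x ⟨hx.1, hxb⟩
        by_cases hxb2 : β ≤ x
        · exact h1.union (hFdR x ⟨hxb2, hx.2⟩)
        · have hnc : x ∉ closure (Set.Icc β (1:ℝ)) := by
            rw [isClosed_Icc.closure_eq]; exact fun hmem => hxb2 hmem.1
          exact h1.union (HasFDerivWithinAt.of_notMem_closure hnc)
      · have hxb2 : β ≤ x := le_of_not_ge hxb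
        have h2 := hFdR x ⟨hxb2, hx.2⟩
        have hnc : x ∉ closure (Set.Icc (-1:ℝ) β) := by
          rw [isClosed_Icc.closure_eq]; exact fun hmem => hxb hmem.2
        exact HasDerivWithinAt.union (HasFDerivWithinAt.of_notMem_closure hnc) h2
    · -- continuity of F'
      intro x hx
      rw [hunion]
      have cL : ContinuousWithinAt F' (Set.Icc (-1:ℝ) β) x := by
        by_cases hxb : x ∈ Set.Icc (-1:ℝ) β
        · have h1 : ContinuousWithinAt (fun y => a * um' y + b * up' y)
              (Set.Icc (-1:ℝ) β) x :=
            (continuousWithinAt_const.mul (hum' x hxb).continuousWithinAt).add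
              (continuousWithinAt_const.mul (hup' x hxb).continuousWithinAt)
          exact h1.congr hF'eqL (hF'eqL x hxb)
        · exact continuousWithinAt_of_notMem_closure
            (by rw [isClosed_Icc.closure_eq]; exact hxb)
      have cR : ContinuousWithinAt F' (Set.Icc β (1:ℝ)) x := by
        by_cases hxb : x ∈ Set.Icc β (1:ℝ)
        · have h1 : ContinuousWithinAt (fun y => c * vm' y + d * vp' y)
              (Set.Icc β (1:ℝ)) x :=
            (continuousWithinAt_const.mul (hvm' x hxb).continuousWithinAt).add
              (continuousWithinAt_const.mul (hvp' x hxb).continuousWithinAt)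
          exact h1.congr hF'eqR (hF'eqR x hxb)
        · exact continuousWithinAt_of_notMem_closure
            (by rw [isClosed_Icc.closure_eq]; exact hxb)
      exact cL.union cR
    · exact (continuousOn_const.mul hum'').add (continuousOn_const.mul hup'')
    · exact (continuousOn_const.mul hvm'').add (continuousOn_const.mul hvp'')
    · intro x hx
      rw [hFeqL x hx]
      linear_combination a * hequm x hx + b * hequp x hx
    · intro x hx
      rw [hFeqR x hx]
      linear_combination c * heqvm x hx + d * heqvp x hx
    · rw [hFeqL (-1) hm1L]
      linear_combination r0
    · rw [hFeqR 1 h1R]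
      linear_combination r3
    · -- nontriviality
      by_contra hcon
      push_neg at hcon
      apply hv0
      have hgl0 : ∀ x ∈ Set.Icc (-1:ℝ) β, a * um x + b * up x = 0 :=
        fun x hx => (hFeqL x hx).symm.trans (hcon x (hsubL hx))
      have hgr0 : ∀ x ∈ Set.Icc β (1:ℝ), c * vm x + d * vp x = 0 :=
        fun x hx => (hFeqR x hx).symm.trans (hcon x (hsubR hx))
      have hudL := uniqueDiffOn_Icc hb1 β hβL
      have hudR := uniqueDiffOn_Icc hb2 β hβR
      have hd0L : a * um' β + b * up' β = 0 := by
        have h1 : HasDerivWithinAt (fun y => a * um y + b * up y) (a * um' β + b * up' β)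
            (Set.Icc (-1:ℝ) β) β := ((hum β hβL).const_mul a).add ((hup β hβL).const_mul b)
        have h2 : HasDerivWithinAt (fun y => a * um y + b * up y) 0
            (Set.Icc (-1:ℝ) β) β :=
          (hasDerivWithinAt_const β _ (0:ℂ)).congr (fun y hy => hgl0 y hy) (hgl0 β hβL)
        rw [← h1.derivWithin hudL, h2.derivWithin hudL]
      have hd0R : c * vm' β + d * vp' β = 0 := by
        have h1 : HasDerivWithinAt (fun y => c * vm y + d * vp y) (c * vm' β + d * vp' β)
            (Set.Icc β (1:ℝ)) β := ((hvm β hβR).const_mul c).add ((hvp β hβR).const_mul d)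
        have h2 : HasDerivWithinAt (fun y => c * vm y + d * vp y) 0
            (Set.Icc β (1:ℝ)) β :=
          (hasDerivWithinAt_const β _ (0:ℂ)).congr (fun y hy => hgr0 y hy) (hgr0 β hβR)
        rw [← h1.derivWithin hudR, h2.derivWithin hudR]
      have hvalL : a * um β + b * up β = 0 := hgl0 β hβL
      have hvalR : c * vm β + d * vp β = 0 := hgr0 β hβR
      have hwL := hWronl β hβL
      have hwR := hWronr β hβR
      have haz : a = 0 := by
        have : a * (um β * up' β - um' β * up β) = 0 := by
          linear_combination up' β * hvalL - up β * hd0L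
        exact (mul_eq_zero.1 this).resolve_right hwL
      have hbz : b = 0 := by
        have : b * (um β * up' β - um' β * up β) = 0 := by
          linear_combination um β * hd0L - um' β * hvalL
        exact (mul_eq_zero.1 this).resolve_right hwL
      have hcz : c = 0 := by
        have : c * (vm β * vp' β - vm' β * vp β) = 0 := by
          linear_combination vp' β * hvalR - vp β * hd0R
        exact (mul_eq_zero.1 this).resolve_right hwR
      have hdz : d = 0 := by
        have : d * (vm β * vp' β - vm' β * vp β) = 0 := by
          linear_combination vm β * hd0R - vm' β * hvalR
        exact (mul_eq_zero.1 this).resolve_right hwR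
      funext i
      fin_cases i
      · exact haz
      · exact hbz
      · exact hcz
      · exact hdz
end

section
/- Let V be holomorphic on an open subset of ℂ containing the real segment [−1,1]. There exist a₀ > 0 and C > 0 such that for every real a ≥ a₀ there is a unique b ∈ ℝ with Im ∫_{−1}^{1} √((a + i·b) − V(x)) dx = 0, and this unique b satisfies |b − (1/2)·Im ∫_{−1}^{1} V(x) dx| ≤ C/a, where √ denotes the principal branch of the complex square root. -/
open Complex Real Set intervalIntegral

lemma sq_sqrtc {z : ℂ} (hz : z ≠ 0) : (z ^ (1/2:ℂ)) ^ 2 = z := by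
  rw [sq, ← Complex.cpow_add _ _ hz]; norm_num

lemma re_sqrtc_pos {z : ℂ} (hz : 0 < z.re) : 0 < (z ^ (1/2:ℂ)).re := by
  have hz0 : z ≠ 0 := by intro h; simp [h] at hz
  rw [Complex.cpow_def_of_ne_zero hz0, Complex.exp_re]
  have him : (Complex.log z * (1/2:ℂ)).im = z.arg / 2 := by
    simp [Complex.mul_im, Complex.log_im]; ring
  rw [him]
  have harg := abs_lt.1 (Complex.abs_arg_lt_pi_div_two_iff.2 (Or.inl hz))
  have hcos : 0 < Real.cos (z.arg / 2) := by
    apply Real.cos_pos_of_mem_Ioo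
    constructor <;> [nlinarith [Real.pi_pos]; nlinarith [Real.pi_pos]]
  positivity

lemma im_sqrtc_pos {z : ℂ} (hz : 0 < z.im) : 0 < (z ^ (1/2:ℂ)).im := by
  have hz0 : z ≠ 0 := by intro h; simp [h] at hz
  rw [Complex.cpow_def_of_ne_zero hz0, Complex.exp_im]
  have him : (Complex.log z * (1/2:ℂ)).im = z.arg / 2 := by
    simp [Complex.mul_im, Complex.log_im]; ring
  rw [him]
  have h1 : 0 < z.arg := lt_of_le_of_ne (Complex.arg_nonneg_iff.2 hz.le)
    (fun h => by have := (Complex.arg_eq_zero_iff.1 h.symm).2; linarith)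
  have h2 : z.arg ≤ π := Complex.arg_le_pi z
  have hsin : 0 < Real.sin (z.arg / 2) := by
    apply Real.sin_pos_of_pos_of_lt_pi <;> nlinarith [Real.pi_pos]
  positivity

lemma im_sqrtc_neg {z : ℂ} (hz : z.im < 0) : (z ^ (1/2:ℂ)).im < 0 := by
  have hz0 : z ≠ 0 := by intro h; simp [h] at hz
  rw [Complex.cpow_def_of_ne_zero hz0, Complex.exp_im]
  have him : (Complex.log z * (1/2:ℂ)).im = z.arg / 2 := by
    simp [Complex.mul_im, Complex.log_im]; ring
  rw [him]
  have h1 : z.arg < 0 := Complex.arg_neg_iff.2 hz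
  have h2 : -π < z.arg := Complex.neg_pi_lt_arg z
  have hsin : Real.sin (z.arg / 2) < 0 := by
    apply Real.sin_neg_of_neg_of_neg_pi_lt <;> nlinarith [Real.pi_pos]
  have hexp := Real.exp_pos (Complex.log z * (1/2:ℂ)).re
  nlinarith

lemma sqrt_expand {a : ℝ} (ha : 0 < a) {z : ℂ} (hz : 0 < z.re) :
    ‖z ^ (1/2:ℂ) - (Real.sqrt a : ℂ) - (z - a)/(2 * Real.sqrt a)‖
      ≤ ‖z - a‖ ^ 2 / (2 * Real.sqrt a * a) := by
  have hz0 : z ≠ 0 := by intro h; simp [h] at hz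
  set s : ℂ := z ^ (1/2:ℂ) with hs
  set r : ℂ := (Real.sqrt a : ℂ) with hr
  have hs2 : s ^ 2 = z := sq_sqrtc hz0
  have hsq : 0 < Real.sqrt a := Real.sqrt_pos.2 ha
  have hr2 : r ^ 2 = (a : ℂ) := by
    rw [hr]; norm_cast; rw [Real.sq_sqrt ha.le]
  have hsre : 0 < s.re := re_sqrtc_pos hz
  have hrre : (0:ℝ) < r.re := by simp [hr, hsq]
  have hsr : s + r ≠ 0 := by
    intro h
    have : (s + r).re = 0 := by rw [h]; simp
    simp [Complex.add_re] at this; linarith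
  have hrne : r ≠ 0 := by
    intro h; rw [h] at hrre; simp at hrre
  have key : s - r - (z - a)/(2 * r) = -((z - a)^2 / (2 * r * (s + r)^2)) := by
    rw [← hs2, ← hr2]
    field_simp
    ring
  rw [hr] at key ⊢
  rw [key]
  rw [norm_neg, norm_div]
  have habs : ‖z - a‖ ^ 2 = ‖(z - a)^2‖ := by
    simp [norm_pow]
  rw [habs]
  apply div_le_div_of_nonneg_left (norm_nonneg _) (by positivity)
  have h1 : Real.sqrt a ≤ ‖s + r‖ := by
    calc Real.sqrt a ≤ (s + r).re := by simp [Complex.add_re, hr]; linarith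
    _ ≤ ‖s + r‖ := Complex.re_le_norm _
  have heq : ‖2 * (Real.sqrt a : ℂ) * (s + (Real.sqrt a : ℂ))^2‖
      = 2 * Real.sqrt a * ‖s + r‖ ^ 2 := by
    simp [norm_mul, norm_pow, abs_of_pos hsq, hr]
  rw [heq]
  have h2 : a ≤ ‖s + r‖ ^ 2 := by
    nlinarith [Real.sq_sqrt ha.le, norm_nonneg (s + r)]
  nlinarith [hsq]

lemma hasDerivAt_im_sqrt {z₀ : ℂ} (h : 0 < z₀.re) (b : ℝ) :
    HasDerivAt (fun t : ℝ => ((z₀ + (t:ℂ) * I) ^ (1/2:ℂ)).im)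
      (((1/2:ℂ) * (z₀ + (b:ℂ) * I) ^ ((1/2:ℂ) - 1) * I).im) b := by
  have hre : (z₀ + (b:ℂ) * I).re = z₀.re := by simp
  have hmem : (z₀ + (b:ℂ) * I) ∈ Complex.slitPlane :=
    Complex.mem_slitPlane_iff.2 (Or.inl (by rw [hre]; exact h))
  have hinner : HasDerivAt (fun t : ℝ => z₀ + (t:ℂ) * I) I b := by
    have h1 : HasDerivAt (fun t : ℝ => (t:ℂ)) 1 b := Complex.ofRealCLM.hasDerivAt
    simpa using (h1.mul_const I).const_add z₀
  have houter := (Complex.hasStrictDerivAt_cpow_const (c := (1/2:ℂ)) hmem).hasDerivAt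
  have hcomp := houter.comp b hinner
  have := Complex.imCLM.hasFDerivAt.comp_hasDerivAt b hcomp
  simpa [Function.comp_def] using this

lemma im_sqrt_strictMono {z₀ : ℂ} (h : 0 < z₀.re) :
    StrictMono (fun t : ℝ => ((z₀ + (t:ℂ) * I) ^ (1/2:ℂ)).im) := by
  apply strictMono_of_deriv_pos
  intro b
  rw [(hasDerivAt_im_sqrt h b).deriv]
  set w : ℂ := z₀ + (b:ℂ) * I with hw
  have hwre : 0 < w.re := by simp [hw, h]
  have hu : 0 < (w ^ (1/2:ℂ)).re := re_sqrtc_pos hwre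
  have hne : (w ^ (1/2:ℂ)) ≠ 0 := by
    intro hh; rw [hh] at hu; simp at hu
  have hpow : w ^ ((1/2:ℂ) - 1) = (w ^ (1/2:ℂ))⁻¹ := by
    have : ((1:ℂ)/2 - 1) = -(1/2) := by norm_num
    rw [this, Complex.cpow_neg]
  rw [hpow]
  have hns : 0 < Complex.normSq (w ^ (1/2:ℂ)) := Complex.normSq_pos.2 hne
  simp only [Complex.mul_im, Complex.mul_re, Complex.inv_re, Complex.inv_im, Complex.I_re,
    Complex.I_im, Complex.ofReal_re, Complex.ofReal_im]
  norm_num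
  positivity

/-- Theorem `curve` of the paper: for `a` large, the equation
`Im ∫_{-1}^1 √((a+ib) − V(x)) dx = 0` has a unique real solution `b`, and
`b = ½·Im ∫_{-1}^1 V + O(1/a)`. -/
theorem stmt7 (V : ℂ → ℂ) (U : Set ℂ) (hU : IsOpen U)
    (hUV : ∀ x ∈ Set.Icc (-1:ℝ) 1, (x : ℂ) ∈ U)
    (hV : DifferentiableOn ℂ V U) :
    ∃ a₀ : ℝ, 0 < a₀ ∧ ∃ C : ℝ, 0 < C ∧
      ∀ a : ℝ, a₀ ≤ a →
        (∃! b : ℝ,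
          (∫ x in (-1:ℝ)..1,
            ((a : ℂ) + (b : ℂ) * Complex.I - V (x : ℂ)) ^ (1/2 : ℂ)).im = 0) ∧
        ∀ b : ℝ,
          (∫ x in (-1:ℝ)..1,
            ((a : ℂ) + (b : ℂ) * Complex.I - V (x : ℂ)) ^ (1/2 : ℂ)).im = 0 →
          |b - (1/2) * (∫ x in (-1:ℝ)..1, V (x : ℂ)).im| ≤ C / a := by
  have hVU : ContinuousOn V U := hV.continuousOn
  have hVc : ContinuousOn (fun x : ℝ => V (x:ℂ)) (Set.Icc (-1:ℝ) 1) :=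
    hVU.comp Complex.continuous_ofReal.continuousOn (fun x hx => hUV x hx)
  obtain ⟨M₀, hM₀⟩ := isCompact_Icc.exists_bound_of_continuousOn hVc
  set M : ℝ := max M₀ 1 with hMdef
  have hM1 : (1:ℝ) ≤ M := le_max_right _ _
  have hMb : ∀ x ∈ Set.Icc (-1:ℝ) 1, ‖V (x:ℂ)‖ ≤ M :=
    fun x hx => (hM₀ x hx).trans (le_max_left _ _)
  refine ⟨M + 1, by linarith, 4 * M^2, by nlinarith, ?_⟩
  intro a ha
  have ha0 : (0:ℝ) < a := by linarith
  have haM : M < a := by linarith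
  set g : ℝ → ℝ := fun b => (∫ x in (-1:ℝ)..1,
      ((a : ℂ) + (b : ℂ) * Complex.I - V (x : ℂ)) ^ (1/2 : ℂ)).im with hgdef
  -- pointwise real part positivity
  have hrepos : ∀ b : ℝ, ∀ x ∈ Set.Icc (-1:ℝ) 1,
      0 < ((a : ℂ) + (b : ℂ) * Complex.I - V (x:ℂ)).re := by
    intro b x hx
    have h1 : (V (x:ℂ)).re ≤ M := (Complex.re_le_norm _).trans (hMb x hx)
    simp only [Complex.sub_re, Complex.add_re, Complex.ofReal_re, Complex.mul_re,
      Complex.I_re, Complex.I_im, Complex.ofReal_im]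
    norm_num
    linarith
  have hslit : ∀ b : ℝ, ∀ x ∈ Set.Icc (-1:ℝ) 1,
      ((a : ℂ) + (b : ℂ) * Complex.I - V (x:ℂ)) ∈ Complex.slitPlane :=
    fun b x hx => Complex.mem_slitPlane_iff.2 (Or.inl (hrepos b x hx))
  -- continuity in x
  have hfc : ∀ b : ℝ, ContinuousOn
      (fun x : ℝ => ((a : ℂ) + (b : ℂ) * Complex.I - V (x:ℂ)) ^ (1/2 : ℂ))
      (Set.Icc (-1:ℝ) 1) := by
    intro b
    apply ContinuousOn.cpow_const
    · exact continuousOn_const.sub hVc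
    · exact fun x hx => hslit b x hx
  have hInt : ∀ b : ℝ, IntervalIntegrable
      (fun x : ℝ => ((a : ℂ) + (b : ℂ) * Complex.I - V (x:ℂ)) ^ (1/2 : ℂ))
      MeasureTheory.volume (-1) 1 :=
    fun b => (hfc b).intervalIntegrable_of_Icc (by norm_num)
  have himc : ∀ b : ℝ, ContinuousOn
      (fun x : ℝ => (((a : ℂ) + (b : ℂ) * Complex.I - V (x:ℂ)) ^ (1/2 : ℂ)).im)
      (Set.Icc (-1:ℝ) 1) :=
    fun b => Complex.continuous_im.comp_continuousOn (hfc b)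
  have hgeq : ∀ b : ℝ, g b = ∫ x in (-1:ℝ)..1,
      (((a : ℂ) + (b : ℂ) * Complex.I - V (x:ℂ)) ^ (1/2 : ℂ)).im := by
    intro b
    rw [hgdef]
    have := (Complex.imCLM.intervalIntegral_comp_comm (hInt b)).symm
    simpa using this
  -- rearrangement lemma
  have harr : ∀ (b : ℝ) (x : ℝ),
      (a : ℂ) + (b : ℂ) * Complex.I - V (x:ℂ) = ((a : ℂ) - V (x:ℂ)) + (b:ℂ) * Complex.I := by
    intro b x; ring
  have hrepos' : ∀ x ∈ Set.Icc (-1:ℝ) 1, 0 < ((a : ℂ) - V (x:ℂ)).re := by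
    intro x hx
    have := hrepos 0 x hx
    simpa using this
  -- strict monotonicity of g
  have hmono : StrictMono g := by
    intro b1 b2 hb
    rw [hgeq b1, hgeq b2]
    apply intervalIntegral.integral_lt_integral_of_continuousOn_of_le_of_exists_lt
      (by norm_num : (-1:ℝ) < 1) (himc b1) (himc b2)
    · intro x hx
      have hx' : x ∈ Set.Icc (-1:ℝ) 1 := Set.Ioc_subset_Icc_self hx
      rw [harr b1 x, harr b2 x]
      exact ((im_sqrt_strictMono (hrepos' x hx')) hb).le
    · refine ⟨0, by norm_num, ?_⟩
      rw [harr b1 0, harr b2 0]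
      exact (im_sqrt_strictMono (hrepos' 0 (by norm_num))) hb
  -- positivity for b > M
  have hpos : ∀ b : ℝ, M < b → 0 < g b := by
    intro b hb
    rw [hgeq b]
    apply intervalIntegral.intervalIntegral_pos_of_pos_on
      ((himc b).intervalIntegrable_of_Icc (by norm_num))
    · intro x hx
      have hx' : x ∈ Set.Icc (-1:ℝ) 1 := Set.Ioo_subset_Icc_self hx
      apply im_sqrtc_pos
      have h1 : (V (x:ℂ)).im ≤ M := by
        have := Complex.abs_im_le_norm (V (x:ℂ))
        have := hMb x hx'
        have := abs_le.1 ((Complex.abs_im_le_norm (V (x:ℂ))).trans (hMb x hx'))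
        linarith [this.2]
      simp only [Complex.sub_im, Complex.add_im, Complex.ofReal_im, Complex.mul_im,
        Complex.I_re, Complex.I_im, Complex.ofReal_re]
      norm_num
      linarith
    · norm_num
  have hneg : ∀ b : ℝ, b < -M → g b < 0 := by
    intro b hb
    have h0 : 0 < -g b := by
      rw [hgeq b]
      rw [← intervalIntegral.integral_neg]
      apply intervalIntegral.intervalIntegral_pos_of_pos_on
        (((himc b).neg).intervalIntegrable_of_Icc (by norm_num))
      · intro x hx
        have hx' : x ∈ Set.Icc (-1:ℝ) 1 := Set.Ioo_subset_Icc_self hx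
        simp only [Pi.neg_apply, neg_pos]
        apply im_sqrtc_neg
        have h1 : -M ≤ (V (x:ℂ)).im := by
          have := abs_le.1 ((Complex.abs_im_le_norm (V (x:ℂ))).trans (hMb x hx'))
          linarith [this.1]
        simp only [Complex.sub_im, Complex.add_im, Complex.ofReal_im, Complex.mul_im,
          Complex.I_re, Complex.I_im, Complex.ofReal_re]
        norm_num
        linarith
      · norm_num
    linarith
  -- continuity of g via a clamped version of V
  set cl : ℝ → ℝ := fun t => max (-1) (min 1 t) with hcl
  have hclmem : ∀ t : ℝ, cl t ∈ Set.Icc (-1:ℝ) 1 := by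
    intro t
    constructor
    · exact le_max_left _ _
    · exact max_le (by norm_num) (min_le_left _ _)
  set W : ℝ → ℂ := fun t => V ((cl t : ℝ) : ℂ) with hW
  have hWc : Continuous W := by
    apply hVU.comp_continuous
    · exact Complex.continuous_ofReal.comp
        ((continuous_const.max (continuous_const.min continuous_id)))
    · exact fun t => hUV _ (hclmem t)
  have hWM : ∀ t : ℝ, ‖W t‖ ≤ M := fun t => hMb _ (hclmem t)
  have hWeq : ∀ x ∈ Set.Icc (-1:ℝ) 1, W x = V (x:ℂ) := by
    intro x hx
    have : cl x = x := by
      rw [hcl]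
      simp only [min_eq_right hx.2, max_eq_right hx.1]
    rw [hW]
    simp only [this]
  have hgW : ∀ b : ℝ, g b = (∫ x in (-1:ℝ)..1,
      ((a : ℂ) + (b : ℂ) * Complex.I - W x) ^ (1/2 : ℂ)).im := by
    intro b
    rw [hgdef]
    show (∫ x in (-1:ℝ)..1, ((a : ℂ) + (b : ℂ) * Complex.I - V (x:ℂ)) ^ (1/2 : ℂ)).im = _
    congr 1
    apply intervalIntegral.integral_congr
    intro x hx
    rw [Set.uIcc_of_le (by norm_num : (-1:ℝ) ≤ 1)] at hx
    simp only [hWeq x hx]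
  have hgc : Continuous g := by
    have hC : Continuous (Function.uncurry
        (fun (b : ℝ) (t : ℝ) => ((a : ℂ) + (b : ℂ) * Complex.I - W t) ^ (1/2 : ℂ))) := by
      apply Continuous.cpow
      · exact (continuous_const.add ((Complex.continuous_ofReal.comp continuous_fst).mul
          continuous_const)).sub (hWc.comp continuous_snd)
      · exact continuous_const
      · rintro ⟨b, t⟩
        apply Complex.mem_slitPlane_iff.2
        left
        have h1 : (W t).re ≤ M := (Complex.re_le_norm _).trans (hWM t)
        simp only [Function.uncurry, Complex.sub_re, Complex.add_re, Complex.ofReal_re,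
          Complex.mul_re, Complex.I_re, Complex.I_im, Complex.ofReal_im]
        norm_num
        linarith
    have hcont := intervalIntegral.continuous_parametric_intervalIntegral_of_continuous'
      (μ := MeasureTheory.volume) hC (-1:ℝ) 1
    have : g = fun b : ℝ => (∫ x in (-1:ℝ)..1,
        ((a : ℂ) + (b : ℂ) * Complex.I - W x) ^ (1/2 : ℂ)).im := funext hgW
    rw [this]
    exact Complex.continuous_im.comp hcont
  -- existence via IVT
  have hex : ∃ b : ℝ, g b = 0 := by
    have hl : g (-(M+1)) < 0 := hneg _ (by linarith)
    have hr : 0 < g (M+1) := hpos _ (by linarith)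
    have := intermediate_value_Icc (by linarith : -(M+1) ≤ M+1) hgc.continuousOn
    obtain ⟨b₀, _, hb₀⟩ := this ⟨hl.le, hr.le⟩
    exact ⟨b₀, hb₀⟩
  obtain ⟨b₀, hb₀⟩ := hex
  constructor
  · exact ⟨b₀, hb₀, fun b' hb' => hmono.injective (hb'.trans hb₀.symm)⟩
  -- the quantitative bound
  intro b hb
  have hbM : |b| ≤ M := by
    rw [abs_le]
    constructor
    · by_contra h
      push_neg at h
      exact absurd hb (ne_of_lt (hneg b (by linarith)))
    · by_contra h
      push_neg at h
      exact absurd hb (ne_of_gt (hpos b h))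
  set r : ℝ := Real.sqrt a with hrdef
  have hrpos : 0 < r := Real.sqrt_pos.2 ha0
  have hVint : IntervalIntegrable (fun x : ℝ => V (x:ℂ)) MeasureTheory.volume (-1) 1 :=
    hVc.intervalIntegrable_of_Icc (by norm_num)
  set mainf : ℝ → ℂ := fun x => (r : ℂ) + ((2*r)⁻¹ : ℝ) • ((b:ℂ) * Complex.I - V (x:ℂ))
    with hmainf
  have hsmInt : IntervalIntegrable
      (fun x : ℝ => ((2*r)⁻¹ : ℝ) • ((b:ℂ) * Complex.I - V (x:ℂ)))
      MeasureTheory.volume (-1) 1 :=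
    (IntervalIntegrable.sub (intervalIntegrable_const : IntervalIntegrable
      (fun _ : ℝ => (b:ℂ) * Complex.I) MeasureTheory.volume (-1) 1) hVint).smul ((2*r)⁻¹ : ℝ)
  have hmainInt : IntervalIntegrable mainf MeasureTheory.volume (-1) 1 :=
    IntervalIntegrable.add intervalIntegrable_const hsmInt
  set Ef : ℝ → ℂ := fun x =>
    ((a : ℂ) + (b : ℂ) * Complex.I - V (x:ℂ)) ^ (1/2 : ℂ) - mainf x with hEf
  have hEInt : IntervalIntegrable Ef MeasureTheory.volume (-1) 1 := (hInt b).sub hmainInt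
  have hsplit : (∫ x in (-1:ℝ)..1,
      ((a : ℂ) + (b : ℂ) * Complex.I - V (x:ℂ)) ^ (1/2 : ℂ))
      = (∫ x in (-1:ℝ)..1, mainf x) + ∫ x in (-1:ℝ)..1, Ef x := by
    rw [← intervalIntegral.integral_add hmainInt hEInt]
    congr 1
    funext x
    rw [hEf]
    ring
  have hmainval : (∫ x in (-1:ℝ)..1, mainf x)
      = (2:ℝ) • (r:ℂ) + ((2*r)⁻¹ : ℝ) • ((2:ℝ) • ((b:ℂ) * Complex.I)
          - ∫ x in (-1:ℝ)..1, V (x:ℂ)) := by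
    rw [hmainf]
    rw [intervalIntegral.integral_add intervalIntegrable_const hsmInt]
    rw [intervalIntegral.integral_smul]
    rw [intervalIntegral.integral_sub intervalIntegrable_const hVint]
    rw [intervalIntegral.integral_const, intervalIntegral.integral_const]
    norm_num
  have hmainim : (∫ x in (-1:ℝ)..1, mainf x).im
      = (2*r)⁻¹ * (2 * b - (∫ x in (-1:ℝ)..1, V (x:ℂ)).im) := by
    rw [hmainval]
    simp only [Complex.add_im, Complex.smul_im, Complex.sub_im, Complex.mul_im,
      Complex.ofReal_im, Complex.ofReal_re, Complex.I_re, Complex.I_im, smul_eq_mul]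
    ring
  -- bound on Ef
  have hEbound : ∀ x ∈ Set.uIoc (-1:ℝ) 1, ‖Ef x‖ ≤ 2 * M^2 / (r * a) := by
    intro x hx
    have hx' : x ∈ Set.Icc (-1:ℝ) 1 := by
      rw [Set.uIoc_of_le (by norm_num : (-1:ℝ) ≤ 1)] at hx
      exact Set.Ioc_subset_Icc_self hx
    set z : ℂ := (a : ℂ) + (b : ℂ) * Complex.I - V (x:ℂ) with hz
    have hzre : 0 < z.re := hrepos b x hx'
    have hza : z - (a:ℂ) = (b:ℂ) * Complex.I - V (x:ℂ) := by rw [hz]; ring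
    have habs : ‖z - (a:ℂ)‖ ≤ 2 * M := by
      rw [hza]
      calc ‖(b:ℂ) * Complex.I - V (x:ℂ)‖
          ≤ ‖(b:ℂ) * Complex.I‖ + ‖V (x:ℂ)‖ := by
            simpa using norm_sub_le ((b:ℂ) * Complex.I) (V (x:ℂ))
        _ ≤ |b| + M := by
            have : ‖(b:ℂ) * Complex.I‖ = |b| := by
              rw [norm_mul, Complex.norm_I, Complex.norm_real, Real.norm_eq_abs, mul_one]
            rw [this]
            exact add_le_add_right (hMb x hx') _
        _ ≤ 2 * M := by
            have := hbM
            linarith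
    have hEform : Ef x = z ^ (1/2:ℂ) - (r : ℂ) - (z - (a:ℂ)) / (2 * (r:ℂ)) := by
      have hr0 : ((r:ℂ)) ≠ 0 := by simpa using ne_of_gt hrpos
      rw [hEf, hmainf, hz]
      simp only [Complex.real_smul]
      push_cast
      field_simp
      try ring
    rw [hEform]
    have := sqrt_expand ha0 hzre
    rw [← hrdef] at this
    calc ‖z ^ (1/2:ℂ) - (r : ℂ) - (z - (a:ℂ)) / (2 * (r:ℂ))‖
        ≤ ‖z - (a:ℂ)‖ ^ 2 / (2 * r * a) := by
          convert this using 3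
      _ ≤ (2*M)^2 / (2 * r * a) := by
          gcongr
          all_goals first
            | exact norm_nonneg _
            | exact habs
      _ = 2 * M^2 / (r * a) := by ring
  have hEint_bound : ‖∫ x in (-1:ℝ)..1, Ef x‖ ≤ 2 * M^2 / (r * a) * 2 := by
    have h := intervalIntegral.norm_integral_le_of_norm_le_const hEbound
    have h2 : |(1:ℝ) - (-1)| = 2 := by norm_num
    rw [h2] at h
    exact h
  -- conclude
  have him := congrArg Complex.im hsplit
  rw [Complex.add_im, hmainim] at him
  have hb' : (∫ x in (-1:ℝ)..1,
      ((a : ℂ) + (b : ℂ) * Complex.I - V (x:ℂ)) ^ (1/2 : ℂ)).im = 0 := hb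
  rw [hb'] at him
  set β : ℝ := (∫ x in (-1:ℝ)..1, V (x:ℂ)).im with hβ
  have he : |(∫ x in (-1:ℝ)..1, Ef x).im| ≤ 4 * M^2 / (r*a) := by
    refine (Complex.abs_im_le_norm _).trans ?_
    calc ‖∫ x in (-1:ℝ)..1, Ef x‖ ≤ 2 * M^2 / (r * a) * 2 := hEint_bound
      _ = 4 * M^2 / (r*a) := by ring
  have heq2 : (2*r)⁻¹ * (2 * b - β) = -(∫ x in (-1:ℝ)..1, Ef x).im := by linarith
  have habs2 : |(2*r)⁻¹ * (2 * b - β)| ≤ 4 * M^2 / (r*a) := by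
    rw [heq2, abs_neg]; exact he
  rw [abs_mul, abs_inv, abs_of_pos (by linarith : (0:ℝ) < 2*r)] at habs2
  have hXb : |2 * b - β| ≤ 8 * M^2 / a := by
    have h1 := mul_le_mul_of_nonneg_left habs2 (by linarith : (0:ℝ) ≤ 2*r)
    rw [← mul_assoc, mul_inv_cancel₀ (by linarith : (2*r) ≠ 0), one_mul] at h1
    calc |2 * b - β| ≤ 2 * r * (4 * M^2 / (r * a)) := h1
      _ = 8 * M^2 / a := by field_simp; ring
  have hfin : |b - 1/2 * β| = |2 * b - β| / 2 := by
    rw [show b - 1/2 * β = (2 * b - β)/2 by ring, abs_div]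
    norm_num
  rw [hfin]
  calc |2 * b - β| / 2 ≤ (8 * M^2 / a) / 2 := by linarith
    _ = 4 * M^2 / a := by ring
end

section
/- Let V be holomorphic on an open subset of ℂ containing the real segment [−1,1], let δ ∈ ℝ and β ∈ (−1,1). There exist a₀ > 0 and C > 0 such that for every real a ≥ a₀ there is a unique b ∈ ℝ with Im ∫_{β}^{1} √((a + i·b) − V(x) − i·δ) dx = 0, and this unique b satisfies |b − ( (Im ∫_{β}^{1} V(x) dx)/(1−β) + δ )| ≤ C/a, where √ denotes the principal branch of the complex square root. -/
open Complex Set MeasureTheory intervalIntegral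

namespace Stmt9Aux

lemma mul_self_half (z : ℂ) : z ^ (1/2:ℂ) * z ^ (1/2:ℂ) = z := by
  have h := Complex.cpow_nat_inv_pow z (n := 2) (by norm_num)
  have h2 : ((2:ℕ):ℂ)⁻¹ = (1/2:ℂ) := by norm_num
  rw [h2] at h
  calc z ^ (1/2:ℂ) * z ^ (1/2:ℂ) = (z ^ (1/2:ℂ))^2 := (pow_two _).symm
  _ = z := h

lemma re_half_pos {z : ℂ} (hz : 0 < z.re) : 0 < (z ^ (1/2:ℂ)).re := by
  have hz0 : z ≠ 0 := by
    intro h; rw [h] at hz; simp at hz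
  rw [Complex.cpow_def_of_ne_zero hz0, Complex.exp_re]
  apply mul_pos (Real.exp_pos _)
  apply Real.cos_pos_of_mem_Ioo
  have harg : |Complex.arg z| < Real.pi / 2 :=
    Complex.abs_arg_lt_pi_div_two_iff.mpr (Or.inl hz)
  have him : (Complex.log z * (1/2)).im = Complex.arg z / 2 := by
    have : (1/2 : ℂ) = ((1/2 : ℝ) : ℂ) := by norm_num
    rw [this, Complex.mul_im, Complex.ofReal_re, Complex.ofReal_im, Complex.log_im]
    ring
  rw [abs_lt] at harg
  obtain ⟨h1, h2⟩ := harg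
  have hpi := Real.pi_pos
  rw [Set.mem_Ioo, him]
  constructor <;> linarith

lemma re_half_ge {z : ℂ} (hz : 0 < z.re) : Real.sqrt z.re ≤ (z ^ (1/2:ℂ)).re := by
  set w := z ^ (1/2:ℂ) with hwdef
  have hw : w * w = z := mul_self_half z
  have hre : z.re = w.re * w.re - w.im * w.im := by rw [← hw]; simp [Complex.mul_re]
  have hwre : 0 < w.re := re_half_pos hz
  have h1 : z.re ≤ w.re * w.re := by nlinarith [sq_nonneg w.im]
  calc Real.sqrt z.re ≤ Real.sqrt (w.re * w.re) := Real.sqrt_le_sqrt h1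
    _ = w.re := by rw [Real.sqrt_mul_self hwre.le]

lemma im_eq (z : ℂ) : z.im = 2 * (z ^ (1/2:ℂ)).re * (z ^ (1/2:ℂ)).im := by
  conv_lhs => rw [← mul_self_half z]
  rw [Complex.mul_im]; ring

end Stmt9Aux

/-- right case of Theorem `curveper`: for `a` large, the equation
`Im ∫_β^1 √((a+ib) − V(x) − iδ) dx = 0` has a unique real solution `b`, and
`b = (Im ∫_β^1 V)/(1−β) + δ + O(1/a)`. -/
theorem stmt9 (V : ℂ → ℂ) (U : Set ℂ) (hU : IsOpen U)
    (hUV : ∀ x ∈ Set.Icc (-1:ℝ) 1, (x : ℂ) ∈ U)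
    (hV : DifferentiableOn ℂ V U) (δ : ℝ) (β : ℝ) (hβ : β ∈ Set.Ioo (-1:ℝ) 1) :
    ∃ a₀ : ℝ, 0 < a₀ ∧ ∃ C : ℝ, 0 < C ∧
      ∀ a : ℝ, a₀ ≤ a →
        (∃! b : ℝ,
          (∫ x in β..(1:ℝ),
            ((a : ℂ) + (b : ℂ) * Complex.I - V (x : ℂ) - Complex.I * δ) ^ (1/2 : ℂ)).im
            = 0) ∧
        ∀ b : ℝ,
          (∫ x in β..(1:ℝ),
            ((a : ℂ) + (b : ℂ) * Complex.I - V (x : ℂ) - Complex.I * δ) ^ (1/2 : ℂ)).im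
            = 0 →
          |b - ((∫ x in β..(1:ℝ), V (x : ℂ)).im / (1 - β) + δ)| ≤ C / a := by
  obtain ⟨hβ1, hβ2⟩ := hβ
  have hβle : β ≤ (1:ℝ) := hβ2.le
  have h1β : (0:ℝ) < 1 - β := by linarith
  have hVca : ∀ x ∈ Icc β (1:ℝ), ContinuousAt (fun t : ℝ => V t) x := by
    intro x hx
    have hxU : (x:ℂ) ∈ U := hUV x ⟨le_trans hβ1.le hx.1, hx.2⟩
    exact ((hV.differentiableAt (hU.mem_nhds hxU)).continuousAt).comp
      Complex.continuous_ofReal.continuousAt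
  have hVc : ContinuousOn (fun t : ℝ => V t) (Icc β 1) :=
    fun x hx => (hVca x hx).continuousWithinAt
  obtain ⟨M0, hM0⟩ := (isCompact_Icc (a := β) (b := (1:ℝ))).exists_bound_of_continuousOn hVc
  set M : ℝ := M0 ⊔ 0 with hMdef
  have hM : ∀ x ∈ Icc β (1:ℝ), ‖V x‖ ≤ M := fun x hx => (hM0 x hx).trans le_sup_left
  have hMnn : 0 ≤ M := le_sup_right
  set R : ℝ := 2*M + 2*|δ| + 2 with hRdef
  have hRpos : 0 < R := by positivity
  refine ⟨2*M + 2, by positivity, R^2, by positivity, fun a ha => ?_⟩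
  have ha2 : (2:ℝ) ≤ a := le_trans (by linarith) ha
  have hapos : 0 < a := by linarith
  set F : ℝ → ℝ → ℂ := fun b x => (a:ℂ) + (b:ℂ)*Complex.I - V x - Complex.I*δ with hFdef
  set W : ℝ → ℝ → ℂ := fun b x => F b x ^ (1/2:ℂ) with hWdef
  set G : ℝ → ℝ := fun b => (∫ x in β..(1:ℝ), W b x).im with hGdef
  have hFre : ∀ (b x : ℝ), (F b x).re = a - (V x).re := by
    intro b x
    simp [hFdef, Complex.add_re, Complex.sub_re, Complex.mul_re, Complex.I_re,
      Complex.I_im, Complex.ofReal_re, Complex.ofReal_im]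
  have hFim : ∀ (b x : ℝ), (F b x).im = b - (V x).im - δ := by
    intro b x
    simp [hFdef, Complex.add_im, Complex.sub_im, Complex.mul_im, Complex.I_re,
      Complex.I_im, Complex.ofReal_re, Complex.ofReal_im]
  have hFrepos : ∀ (b : ℝ), ∀ x ∈ Icc β (1:ℝ), a/2 ≤ (F b x).re := by
    intro b x hx
    have h1 : (V x).re ≤ M :=
      le_trans (Complex.re_le_norm _) (le_trans (le_of_eq rfl) (hM x hx))
    rw [hFre]; linarith
  have hFpos' : ∀ (b : ℝ), ∀ x ∈ Icc β (1:ℝ), 0 < (F b x).re :=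
    fun b x hx => lt_of_lt_of_le (by linarith) (hFrepos b x hx)
  have hWrepos : ∀ (b : ℝ), ∀ x ∈ Icc β (1:ℝ), 0 < (W b x).re :=
    fun b x hx => Stmt9Aux.re_half_pos (hFpos' b x hx)
  have hWsq : ∀ (b x : ℝ), W b x * W b x = F b x := fun b x => Stmt9Aux.mul_self_half _
  have hWre1 : ∀ (b : ℝ), ∀ x ∈ Icc β (1:ℝ), 1 ≤ (W b x).re := by
    intro b x hx
    have h0 := Stmt9Aux.re_half_ge (hFpos' b x hx)
    have h1 : (1:ℝ) ≤ Real.sqrt ((F b x).re) := by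
      rw [show (1:ℝ) = Real.sqrt 1 by simp]
      apply Real.sqrt_le_sqrt
      have := hFrepos b x hx; linarith
    exact le_trans h1 h0
  have hWcx : ∀ b : ℝ, ContinuousOn (fun x : ℝ => W b x) (Icc β 1) := by
    intro b x hx
    have hFc : ContinuousAt (fun t : ℝ => F b t) x :=
      (continuousAt_const.sub (hVca x hx)).sub continuousAt_const
    exact (hFc.cpow continuousAt_const (Or.inl (hFpos' b x hx))).continuousWithinAt
  have hWint : ∀ b : ℝ, IntervalIntegrable (W b) volume β 1 := by
    intro b
    apply ContinuousOn.intervalIntegrable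
    rw [Set.uIcc_of_le hβle]
    exact hWcx b
  have hWimint : ∀ b : ℝ, IntervalIntegrable (fun x => (W b x).im) volume β 1 := by
    intro b
    apply ContinuousOn.intervalIntegrable
    rw [Set.uIcc_of_le hβle]
    exact Complex.continuous_im.comp_continuousOn (hWcx b)
  have hGeq : ∀ b : ℝ, G b = ∫ x in β..(1:ℝ), (W b x).im := by
    intro b
    have h := ContinuousLinearMap.intervalIntegral_comp_comm Complex.imCLM (hWint b)
    simp only [Complex.imCLM_apply] at h
    simp only [hGdef]
    exact h.symm
  -- pointwise difference formula
  have hdiff : ∀ (b₁ b₂ : ℝ), ∀ x ∈ Icc β (1:ℝ),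
      (W b₂ x).im - (W b₁ x).im
        = (b₂ - b₁) * ((W b₁ x + W b₂ x).re / Complex.normSq (W b₁ x + W b₂ x)) := by
    intro b₁ b₂ x hx
    have hsre : 0 < (W b₁ x + W b₂ x).re := by
      have hA := hWrepos b₁ x hx; have hB := hWrepos b₂ x hx
      rw [Complex.add_re]; linarith
    have hs0 : (W b₁ x + W b₂ x) ≠ 0 := fun h => by rw [h] at hsre; simp at hsre
    have hsq : W b₂ x * W b₂ x - W b₁ x * W b₁ x = ((b₂ - b₁ : ℝ) : ℂ) * Complex.I := by
      rw [hWsq, hWsq]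
      simp only [hFdef]
      push_cast; ring
    have hdw : W b₂ x - W b₁ x = ((b₂ - b₁ : ℝ):ℂ) * Complex.I / (W b₁ x + W b₂ x) := by
      rw [eq_div_iff hs0]; linear_combination hsq
    have h3 := congrArg Complex.im hdw
    rw [Complex.sub_im, Complex.div_im] at h3
    rw [h3]
    simp only [Complex.mul_re, Complex.mul_im, Complex.I_re, Complex.I_im,
      Complex.ofReal_re, Complex.ofReal_im]
    ring
  have hsrebig : ∀ (b₁ b₂ : ℝ), ∀ x ∈ Icc β (1:ℝ),
      (W b₁ x + W b₂ x).re / Complex.normSq (W b₁ x + W b₂ x) ≤ 1 ∧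
      0 < (W b₁ x + W b₂ x).re / Complex.normSq (W b₁ x + W b₂ x) := by
    intro b₁ b₂ x hx
    have hsre : 2 ≤ (W b₁ x + W b₂ x).re := by
      have hA := hWre1 b₁ x hx; have hB := hWre1 b₂ x hx
      rw [Complex.add_re]; linarith
    have hs0 : (W b₁ x + W b₂ x) ≠ 0 := by
      intro h; rw [h] at hsre; simp at hsre; linarith
    have hnsq : 0 < Complex.normSq (W b₁ x + W b₂ x) := Complex.normSq_pos.mpr hs0
    refine ⟨?_, div_pos (by linarith) hnsq⟩
    rw [div_le_one hnsq, Complex.normSq_apply]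
    nlinarith [sq_nonneg (W b₁ x + W b₂ x).im]
  -- strict monotonicity
  have hGsub : ∀ b₁ b₂ : ℝ, G b₂ - G b₁ = ∫ x in β..(1:ℝ), ((W b₂ x).im - (W b₁ x).im) := by
    intro b₁ b₂
    rw [hGeq, hGeq, ← intervalIntegral.integral_sub (hWimint b₂) (hWimint b₁)]
  have hmono : StrictMono G := by
    intro b₁ b₂ hb
    have hpos : 0 < ∫ x in β..(1:ℝ), ((W b₂ x).im - (W b₁ x).im) := by
      apply intervalIntegral_pos_of_pos_on ((hWimint b₂).sub (hWimint b₁)) ?_ hβ2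
      intro x hx
      have hx' : x ∈ Icc β (1:ℝ) := Ioo_subset_Icc_self hx
      show 0 < (W b₂ x).im - (W b₁ x).im
      rw [hdiff b₁ b₂ x hx']
      exact mul_pos (by linarith) (hsrebig b₁ b₂ x hx').2
    have := hGsub b₁ b₂
    linarith
  -- Lipschitz, hence continuity
  have hlip : ∀ b₁ b₂ : ℝ, |G b₂ - G b₁| ≤ 2 * |b₂ - b₁| := by
    intro b₁ b₂
    rw [hGsub b₁ b₂]
    have hbd := intervalIntegral.norm_integral_le_of_norm_le_const
      (C := |b₂ - b₁|) (f := fun x => (W b₂ x).im - (W b₁ x).im) (a := β) (b := 1) ?_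
    · rw [Real.norm_eq_abs] at hbd
      have h1b : |1 - β| ≤ 2 := by rw [abs_le]; constructor <;> linarith
      calc |∫ x in β..(1:ℝ), ((W b₂ x).im - (W b₁ x).im)| ≤ |b₂ - b₁| * |1 - β| := hbd
        _ ≤ |b₂ - b₁| * 2 := mul_le_mul_of_nonneg_left h1b (abs_nonneg _)
        _ = 2 * |b₂ - b₁| := by ring
    · intro x hx
      rw [Set.uIoc_of_le hβle] at hx
      have hx' : x ∈ Icc β (1:ℝ) := Ioc_subset_Icc_self hx
      show ‖(W b₂ x).im - (W b₁ x).im‖ ≤ |b₂ - b₁|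
      rw [Real.norm_eq_abs, hdiff b₁ b₂ x hx', abs_mul]
      obtain ⟨hle1, hpos1⟩ := hsrebig b₁ b₂ x hx'
      calc |b₂ - b₁| * |(W b₁ x + W b₂ x).re / Complex.normSq (W b₁ x + W b₂ x)|
          ≤ |b₂ - b₁| * 1 := by
            apply mul_le_mul_of_nonneg_left ?_ (abs_nonneg _)
            rw [abs_of_pos hpos1]; exact hle1
        _ = |b₂ - b₁| := mul_one _
  have hGc : Continuous G := by
    have hL : LipschitzWith 2 G := by
      apply LipschitzWith.of_dist_le_mul
      intro x y
      rw [Real.dist_eq, Real.dist_eq]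
      have h := hlip y x
      push_cast
      linarith
    exact hL.continuous
  -- sign formula
  have hWim : ∀ (b : ℝ), ∀ x ∈ Icc β (1:ℝ),
      (W b x).im = (b - (V x).im - δ) / (2 * (W b x).re) := by
    intro b x hx
    have h := Stmt9Aux.im_eq (F b x)
    have hW' : F b x ^ (1/2:ℂ) = W b x := rfl
    rw [hW', hFim] at h
    have hwre := hWrepos b x hx
    rw [eq_div_iff (by nlinarith : (2 * (W b x).re) ≠ 0)]
    linarith
  have hVabsim : ∀ x ∈ Icc β (1:ℝ), |(V x).im| ≤ M := fun x hx =>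
    le_trans (Complex.abs_im_le_norm _)
      (le_trans (le_of_eq rfl) (hM x hx))
  have hGpos : 0 < G (δ + M + 1) := by
    rw [hGeq]
    apply intervalIntegral_pos_of_pos_on (hWimint _) ?_ hβ2
    intro x hx
    have hx' : x ∈ Icc β (1:ℝ) := Ioo_subset_Icc_self hx
    show 0 < (W (δ + M + 1) x).im
    rw [hWim _ x hx']
    have hwre := hWrepos (δ + M + 1) x hx'
    apply div_pos ?_ (by linarith)
    have hv := abs_le.mp (hVabsim x hx')
    linarith [hv.2]
  have hGneg : G (δ - M - 1) < 0 := by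
    have hpos : 0 < ∫ x in β..(1:ℝ), (-(W (δ - M - 1) x).im) := by
      apply intervalIntegral_pos_of_pos_on ((hWimint _).neg) ?_ hβ2
      intro x hx
      have hx' : x ∈ Icc β (1:ℝ) := Ioo_subset_Icc_self hx
      show 0 < -(W (δ - M - 1) x).im
      rw [hWim _ x hx', ← neg_div]
      have hwre := hWrepos (δ - M - 1) x hx'
      apply div_pos ?_ (by linarith)
      have hv := abs_le.mp (hVabsim x hx')
      linarith [hv.1]
    rw [intervalIntegral.integral_neg] at hpos
    rw [hGeq]
    linarith
  -- IVT
  have hmle : δ - M - 1 ≤ δ + M + 1 := by linarith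
  obtain ⟨b₀, hb₀mem, hb₀⟩ := intermediate_value_Icc hmle hGc.continuousOn
    (Set.mem_Icc.mpr ⟨hGneg.le, hGpos.le⟩ : (0:ℝ) ∈ Icc (G (δ - M - 1)) (G (δ + M + 1)))
  constructor
  · exact ⟨b₀, hb₀, fun y hy => hmono.injective ((hy : G y = 0).trans hb₀.symm)⟩
  · intro b hb
    have hb' : G b = 0 := hb
    have hbeq : b = b₀ := hmono.injective (hb'.trans hb₀.symm)
    have hbmem : b ∈ Icc (δ - M - 1) (δ + M + 1) := hbeq ▸ hb₀mem
    have hbabs : |b - δ| ≤ M + 1 := by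
      rw [abs_le]; exact ⟨by linarith [hbmem.1], by linarith [hbmem.2]⟩
    -- quantitative estimate
    set s := Real.sqrt a with hsdef
    have hs0 : 0 < s := Real.sqrt_pos.mpr hapos
    have hss : s * s = a := Real.mul_self_sqrt hapos.le
    have hs3 : (0:ℝ) < s^3 := pow_pos hs0 3
    have herr : ∀ x ∈ Icc β (1:ℝ),
        |(W b x).im - (b - (V x).im - δ)/(2*s)| ≤ R^2/(2*s^3) := by
      intro x hx
      have hWre := hWrepos b x hx
      have h1 : W b x * W b x = F b x := hWsq b x
      have hsumre : s ≤ (W b x + (s:ℂ)).re := by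
        rw [Complex.add_re, Complex.ofReal_re]; linarith
      have hsum0 : W b x + (s:ℂ) ≠ 0 := by
        intro h; rw [h] at hsumre; simp at hsumre; linarith
      have hFa : ‖F b x - (a:ℂ)‖ ≤ R := by
        have heq : F b x - (a:ℂ) = ((b - δ : ℝ):ℂ)*Complex.I - V x := by
          simp only [hFdef]; push_cast; ring
        rw [heq]
        calc ‖((b - δ : ℝ):ℂ)*Complex.I - V x‖
            ≤ ‖((b - δ : ℝ):ℂ)*Complex.I‖ + ‖V x‖ := norm_sub_le _ _
          _ ≤ |b - δ| + M := by
              apply add_le_add ?_ (hM x hx)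
              rw [norm_mul, Complex.norm_I, mul_one,
                Complex.norm_real, Real.norm_eq_abs]
          _ ≤ R := by rw [hRdef]; have := abs_nonneg δ; linarith
      have hsa : ((s:ℝ):ℂ) * ((s:ℝ):ℂ) = (a:ℂ) := by exact_mod_cast hss
      have hdw : W b x - (s:ℂ) = (F b x - (a:ℂ))/(W b x + (s:ℂ)) := by
        rw [eq_div_iff hsum0]
        linear_combination h1 - hsa
      have hnw : ‖W b x - (s:ℂ)‖ ≤ R/s := by
        rw [hdw, norm_div]
        apply div_le_div₀ hRpos.le hFa hs0
        calc s ≤ (W b x + (s:ℂ)).re := hsumre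
          _ ≤ ‖W b x + (s:ℂ)‖ := by
              exact Complex.re_le_norm _
      have h2s : (2*(s:ℂ)) ≠ 0 := by
        simp only [ne_eq, mul_eq_zero]
        push_neg
        exact ⟨by norm_num, by exact_mod_cast hs0.ne'⟩
      have herr2 : W b x - (s:ℂ) - (F b x - (a:ℂ))/(2*(s:ℂ))
          = -((W b x - (s:ℂ))*(W b x - (s:ℂ)))/(2*(s:ℂ)) := by
        rw [eq_div_iff h2s, sub_mul, div_mul_cancel₀ _ h2s]
        linear_combination h1 - hsa
      have him : ((F b x - (a:ℂ))/(2*(s:ℂ))).im = (b - (V x).im - δ)/(2*s) := by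
        rw [show (2*(s:ℂ)) = ((2*s : ℝ):ℂ) by push_cast; ring, Complex.div_ofReal_im,
          Complex.sub_im, hFim, Complex.ofReal_im]
        ring
      have hkey : (W b x).im - (b - (V x).im - δ)/(2*s)
          = (W b x - (s:ℂ) - (F b x - (a:ℂ))/(2*(s:ℂ))).im := by
        rw [Complex.sub_im, Complex.sub_im, Complex.ofReal_im, him]
        ring
      rw [hkey, herr2]
      have hnorm : ‖-((W b x - (s:ℂ))*(W b x - (s:ℂ)))/(2*(s:ℂ))‖
          = ‖W b x - (s:ℂ)‖ * ‖W b x - (s:ℂ)‖ / (2*s) := by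
        rw [norm_div, norm_neg, norm_mul]
        congr 1
        rw [show (2*(s:ℂ)) = ((2*s : ℝ):ℂ) by push_cast; ring, Complex.norm_real,
          Real.norm_eq_abs, abs_of_pos (by linarith)]
      calc |(-((W b x - (s:ℂ))*(W b x - (s:ℂ)))/(2*(s:ℂ))).im|
          ≤ ‖-((W b x - (s:ℂ))*(W b x - (s:ℂ)))/(2*(s:ℂ))‖ := by
            exact Complex.abs_im_le_norm _
        _ = ‖W b x - (s:ℂ)‖ * ‖W b x - (s:ℂ)‖ / (2*s) := hnorm
        _ ≤ (R/s) * (R/s) / (2*s) := by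
            apply div_le_div_of_nonneg_right ?_ (by linarith)
            exact mul_le_mul hnw hnw (norm_nonneg _) (le_of_lt (div_pos hRpos hs0))
        _ = R^2/(2*s^3) := by field_simp
    have hVint : IntervalIntegrable (fun x : ℝ => V x) volume β 1 := by
      apply ContinuousOn.intervalIntegrable
      rw [Set.uIcc_of_le hβle]
      exact hVc
    have hVimint : IntervalIntegrable (fun x : ℝ => (V x).im) volume β 1 := by
      apply ContinuousOn.intervalIntegrable
      rw [Set.uIcc_of_le hβle]
      exact Complex.continuous_im.comp_continuousOn hVc
    have hJ : (∫ x in β..(1:ℝ), V x).im = ∫ x in β..(1:ℝ), (V x).im := by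
      have h := ContinuousLinearMap.intervalIntegral_comp_comm Complex.imCLM hVint
      simp only [Complex.imCLM_apply] at h
      exact h.symm
    have hgint : IntervalIntegrable (fun x : ℝ => (b - (V x).im - δ)/(2*s)) volume β 1 := by
      apply IntervalIntegrable.div_const
      exact (intervalIntegrable_const.sub hVimint).sub intervalIntegrable_const
    have hsplit : (0:ℝ) = (∫ x in β..(1:ℝ), (b - (V x).im - δ)/(2*s))
        + ∫ x in β..(1:ℝ), ((W b x).im - (b - (V x).im - δ)/(2*s)) := by
      rw [← intervalIntegral.integral_add hgint ((hWimint b).sub hgint)]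
      rw [← hb', hGeq b]
      refine intervalIntegral.integral_congr fun x hx => by ring
    have hI1 : (∫ x in β..(1:ℝ), (b - (V x).im - δ)/(2*s))
        = ((1-β)*(b-δ) - (∫ x in β..(1:ℝ), (V x).im))/(2*s) := by
      rw [intervalIntegral.integral_div]
      congr 1
      rw [show (fun x : ℝ => b - (V x).im - δ) = fun x : ℝ => (b - δ) - (V x).im from
        funext fun x => by ring]
      rw [intervalIntegral.integral_sub intervalIntegrable_const hVimint,
        intervalIntegral.integral_const, smul_eq_mul]
    have hI2 : |∫ x in β..(1:ℝ), ((W b x).im - (b - (V x).im - δ)/(2*s))|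
        ≤ R^2/(2*s^3) * (1-β) := by
      have hbd := intervalIntegral.norm_integral_le_of_norm_le_const
        (C := R^2/(2*s^3)) (f := fun x => (W b x).im - (b - (V x).im - δ)/(2*s))
        (a := β) (b := 1) ?_
      · rw [Real.norm_eq_abs, abs_of_pos h1β] at hbd
        exact hbd
      · intro x hx
        rw [Set.uIoc_of_le hβle] at hx
        show ‖(W b x).im - (b - (V x).im - δ)/(2*s)‖ ≤ R^2/(2*s^3)
        rw [Real.norm_eq_abs]
        exact herr x (Ioc_subset_Icc_self hx)
    set I2 : ℝ := ∫ x in β..(1:ℝ), ((W b x).im - (b - (V x).im - δ)/(2*s)) with hI2def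
    set T : ℝ := (1-β)*(b-δ) - (∫ x in β..(1:ℝ), (V x).im) with hTdef
    have h2s0 : (2*s) ≠ 0 := by intro h; nlinarith
    have hTI : T = -(2*s) * I2 := by
      have h2 : T/(2*s) = -I2 := by rw [← hI1]; linarith [hsplit]
      rw [div_eq_iff h2s0] at h2
      rw [h2]; ring
    have hTabs : |T| ≤ (1-β) * R^2 / a := by
      rw [hTI, abs_mul, abs_neg, abs_of_pos (by linarith : (0:ℝ) < 2*s)]
      calc (2*s) * |I2| ≤ (2*s) * (R^2/(2*s^3) * (1-β)) :=
            mul_le_mul_of_nonneg_left hI2 (by linarith)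
        _ = (1-β) * R^2 / a := by
            rw [← hss]; field_simp
    have hgoal : b - ((∫ x in β..(1:ℝ), V x).im / (1 - β) + δ) = T / (1-β) := by
      rw [hTdef, hJ]; field_simp; ring
    rw [hgoal, abs_div, abs_of_pos h1β, div_le_div_iff₀ h1β hapos]
    calc |T| * a ≤ (1-β) * R^2 := (le_div_iff₀ hapos).mp hTabs
      _ = R^2 * (1-β) := mul_comm _ _
end
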